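/- For z ∈ Ĩ_n, the number ℓ̂(z) := (ℓ(z) + ℓ'(z))/2 is a nonnegative integer, and ℓ̂(z) = ℓ(π) for every minimal-length element π of A_Hecke(z) = {π ∈ S̃_n : π^{-1} ∘ π = z}. -/

import Mathlib

open scoped TensorProduct

/-- Membership in the affine symmetric group `S̃_n`, viewed inside `Equiv.Perm ℤ`. -/
def IsAffine (n : ℕ) (π : Equiv.Perm ℤ) : Prop :=
  (∀ i : ℤ, π (i + n) = π i + n) ∧
  (∑ i ∈ Finset.Icc (1 : ℤ) (n : ℤ), π i) = ∑ i ∈ Finset.Icc (1 : ℤ) (n : ℤ), i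

/-- The underlying function of the affine reflection `t_{ij}`. -/
def affTFun (n : ℕ) (i j k : ℤ) : ℤ :=
  if (k - i) % (n : ℤ) = 0 then k - i + j
  else if (k - j) % (n : ℤ) = 0 then k - j + i
  else k

theorem affTFun_involutive {n : ℕ} {i j : ℤ} (h : ¬ (j - i) % (n : ℤ) = 0) :
    Function.Involutive (affTFun n i j) := by
  have key : ∀ a : ℤ, a % (n : ℤ) = 0 ↔ (n : ℤ) ∣ a :=
    fun a => (@Int.dvd_iff_emod_eq_zero (n : ℤ) a).symm
  rw [key] at h
  intro k
  by_cases h1 : (n : ℤ) ∣ (k - i)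
  · have h2 : ¬ (n : ℤ) ∣ (k - i + j - i) := by
      intro hd
      apply h
      have h5 : j - i = (k - i + j - i) - (k - i) := by ring
      rw [h5]
      exact dvd_sub hd h1
    have h3 : (n : ℤ) ∣ (k - i + j - j) := by
      have h5 : k - i + j - j = k - i := by ring
      rw [h5]; exact h1
    have e1 : affTFun n i j k = k - i + j := by simp [affTFun, key, h1]
    have e2 : affTFun n i j (k - i + j) = k := by
      simp only [affTFun, key]
      rw [if_neg h2, if_pos h3]
      ring
    rw [e1, e2]
  · by_cases h2 : (n : ℤ) ∣ (k - j)
    · have h3 : (n : ℤ) ∣ (k - j + i - i) := by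
        have h5 : k - j + i - i = k - j := by ring
        rw [h5]; exact h2
      have e1 : affTFun n i j k = k - j + i := by simp [affTFun, key, h1, h2]
      have e2 : affTFun n i j (k - j + i) = k := by
        simp only [affTFun, key]
        rw [if_pos h3]
        ring
      rw [e1, e2]
    · have e1 : affTFun n i j k = k := by simp [affTFun, key, h1, h2]
      rw [e1, e1]

/-- The affine reflection `t_{ij}` (interpreted as the identity when `i ≡ j (mod n)`). -/
noncomputable def affT (n : ℕ) (i j : ℤ) : Equiv.Perm ℤ :=
  if h : (j - i) % (n : ℤ) = 0 then 1
  else Function.Involutive.toPerm _ (affTFun_involutive h)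

/-- The simple reflection `s_i = t_{i,i+1}` of `S̃_n`. -/
noncomputable def affS (n : ℕ) (i : ℤ) : Equiv.Perm ℤ := affT n i (i + 1)

/-- Coxeter length: minimal length of a word in the simple reflections `s_1, …, s_n`. -/
noncomputable def wordLength (n : ℕ) (π : Equiv.Perm ℤ) : ℕ :=
  sInf {l : ℕ | ∃ w : List ℤ,
    (∀ x ∈ w, 1 ≤ x ∧ x ≤ (n : ℤ)) ∧ (w.map (affS n)).prod = π ∧ w.length = l}

/-- The set of inversions of `π`, up to the diagonal translation relation. -/
def InvPair (π : Equiv.Perm ℤ) : Type :=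
  {p : ℤ × ℤ // p.1 < p.2 ∧ π p.2 < π p.1}

/-- The number of equivalence classes of inversions of `π` under
`(a,b) ~ (a + mn, b + mn)`. -/
noncomputable def invLength (n : ℕ) (π : Equiv.Perm ℤ) : ℕ :=
  Nat.card (Quot fun p q : InvPair π =>
    ∃ m : ℤ, q.1.1 = p.1.1 + m * n ∧ q.1.2 = p.1.2 + m * n)

/-- Entry `c_i` of the code of an affine permutation. -/
noncomputable def codeEntry (π : Equiv.Perm ℤ) (i : ℤ) : ℕ :=
  Nat.card {j : ℤ // i < j ∧ π j < π i}

/-- Entry `ĉ_i` of the involution code of an affine involution. -/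
noncomputable def icodeEntry (z : Equiv.Perm ℤ) (i : ℤ) : ℕ :=
  Nat.card {j : ℤ // i < j ∧ z j < z i ∧ z j ≤ i}

/-- `ℓ'(z)`: `n` minus the number of orbits of `z` acting on `ℤ/nℤ`. -/
noncomputable def lprime (n : ℕ) (z : Equiv.Perm ℤ) : ℕ :=
  n - Nat.card (Quot fun a b : ZMod n => ((z (a.val : ℤ) : ℤ) : ZMod n) = b)

/-- The characterizing properties of the Demazure (0-Hecke) product on `S̃_n`:
closure, associativity, `s_i ∘ s_i = s_i`, and agreement with the group product
on length-additive factorizations. -/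
def IsDemazure (n : ℕ) (D : Equiv.Perm ℤ → Equiv.Perm ℤ → Equiv.Perm ℤ) : Prop :=
  (∀ a b, IsAffine n a → IsAffine n b → IsAffine n (D a b)) ∧
  (∀ a b c, IsAffine n a → IsAffine n b → IsAffine n c →
    D (D a b) c = D a (D b c)) ∧
  (∀ i : ℤ, D (affS n i) (affS n i) = affS n i) ∧
  (∀ a b, IsAffine n a → IsAffine n b →
    wordLength n (a * b) = wordLength n a + wordLength n b → D a b = a * b)

/-- The set of Hecke atoms `{π : π⁻¹ ∘ π = z}`. -/
def AHecke (n : ℕ) (D : Equiv.Perm ℤ → Equiv.Perm ℤ → Equiv.Perm ℤ)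
    (z : Equiv.Perm ℤ) : Set (Equiv.Perm ℤ) :=
  {π | IsAffine n π ∧ D π⁻¹ π = z}

/-- The set of atoms: minimal-length Hecke atoms. -/
def DemAtoms (n : ℕ) (D : Equiv.Perm ℤ → Equiv.Perm ℤ → Equiv.Perm ℤ)
    (z : Equiv.Perm ℤ) : Set (Equiv.Perm ℤ) :=
  {π | π ∈ AHecke n D z ∧ ∀ σ ∈ AHecke n D z, wordLength n π ≤ wordLength n σ}

/-- The Bruhat covering relation on `S̃_n`. -/
def BruhatCov (n : ℕ) (a b : Equiv.Perm ℤ) : Prop :=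
  (∃ i j : ℤ, i < j ∧ (j - i) % (n : ℤ) ≠ 0 ∧ b = a * affT n i j) ∧
  wordLength n b = wordLength n a + 1

/-- The Bruhat order on `S̃_n`. -/
def BruhatLE (n : ℕ) : Equiv.Perm ℤ → Equiv.Perm ℤ → Prop :=
  Relation.ReflTransGen (BruhatCov n)

/-- The covering relation of the Bruhat order restricted to involutions in `S̃_n`. -/
def BruhatCovI (n : ℕ) (y z : Equiv.Perm ℤ) : Prop :=
  IsAffine n y ∧ IsAffine n z ∧ y⁻¹ = y ∧ z⁻¹ = z ∧
  BruhatLE n y z ∧ y ≠ z ∧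
  ∀ w : Equiv.Perm ℤ, IsAffine n w → w⁻¹ = w →
    BruhatLE n y w → BruhatLE n w z → w = y ∨ w = z

/-- Strict dominance order on partitions (written as weakly decreasing functions). -/
def DomLT (p q : ℕ → ℕ) : Prop :=
  p ≠ q ∧ ∀ k : ℕ, ∑ i ∈ Finset.range k, p i ≤ ∑ i ∈ Finset.range k, q i

/-- The shape `λ(π)`: the transpose of the partition sorting the code of `π⁻¹`,
recorded as the weakly decreasing function `k ↦ λ(π)_{k+1}`. -/
noncomputable def affShape (n : ℕ) (π : Equiv.Perm ℤ) : ℕ → ℕ :=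
  fun k => Multiset.countP (fun x => k < x)
    ((Finset.Icc (1 : ℤ) (n : ℤ)).val.map (codeEntry π⁻¹))

/-- The shape `μ(z)`: the transpose of the partition sorting the involution code of `z`,
recorded as the weakly decreasing function `k ↦ μ(z)_{k+1}`. -/
noncomputable def invShape (n : ℕ) (z : Equiv.Perm ℤ) : ℕ → ℕ :=
  fun k => Multiset.countP (fun x => k < x)
    ((Finset.Icc (1 : ℤ) (n : ℤ)).val.map (icodeEntry z))

/-- The weakly decreasing rearrangement of a multiset of naturals, padded by zeros. -/
noncomputable def rearr (s : Multiset ℕ) : ℕ → ℕ :=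
  fun k => ((s.sort (· ≤ ·)).reverse).getD k 0

/-- Remove the entries of a list of integers that repeat an earlier residue mod `n`. -/
def dedupMod (n : ℕ) : List ℤ → List ℤ
  | [] => []
  | x :: xs => x :: dedupMod n (xs.filter fun y => (y - x) % (n : ℤ) ≠ 0)
termination_by l => l.length
decreasing_by
  simp only [List.length_cons]
  simp only [List.length_cons, List.length_unattach]
  exact Nat.lt_succ_of_le ((List.length_filter_le _ _).trans (le_of_eq List.length_attach))

/-- The window `[[z(a₁), a₁, z(a₂), a₂, …]]` of `α_min(z)⁻¹`, where `a₁ < a₂ < ⋯`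
are the elements `a ∈ [n]` with `a ≤ z(a)`. -/
noncomputable def aminWindow (n : ℕ) (z : Equiv.Perm ℤ) : List ℤ :=
  dedupMod n
    ((((Finset.Icc (1 : ℤ) (n : ℤ)).sort (· ≤ ·)).filter fun a => a ≤ z a).flatMap
      fun a => [z a, a])

/-- Cyclically decreasing elements of `S̃_n`. -/
def IsCycDec (n : ℕ) (π : Equiv.Perm ℤ) : Prop :=
  ∃ w : List ℤ,
    (∀ x ∈ w, 1 ≤ x ∧ x ≤ (n : ℤ)) ∧ (w.map (affS n)).prod = π ∧
    w.length = wordLength n π ∧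
    w.Pairwise fun a b => (a + 1 - b) % (n : ℤ) ≠ 0

/-- The coefficient of the monomial `∏ₖ xₖ₊₁^(α k)` in Lam's affine Stanley symmetric
function `F_π`: the number of length-additive factorizations of `π` into cyclically
decreasing factors of lengths prescribed by `α`. -/
noncomputable def stanleyCoeff (n : ℕ) (π : Equiv.Perm ℤ) (α : ℕ →₀ ℕ) : ℕ :=
  Nat.card {f : ℕ → Equiv.Perm ℤ //
    (∀ k, IsCycDec n (f k)) ∧ (∀ k, wordLength n (f k) = α k) ∧
    (∑ k ∈ α.support, α k) = wordLength n π ∧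
    ∃ N : ℕ, (∀ k, N ≤ k → f k = 1) ∧ ((List.range N).map f).prod = π}

/-- The set `Φ⁻_r(y)` of Bruhat covers of `y` of the form `τⁿ_{i r}(y)` with `i < r`
and `i ∉ {r, y(r)} + nℤ`. -/
def PhiMinus (n : ℕ) (τ : ℤ → ℤ → Equiv.Perm ℤ → Equiv.Perm ℤ)
    (y : Equiv.Perm ℤ) (r : ℤ) : Set (Equiv.Perm ℤ) :=
  {z | BruhatCovI n y z ∧ ∃ i : ℤ, i < r ∧ (i - r) % (n : ℤ) ≠ 0 ∧
    (i - y r) % (n : ℤ) ≠ 0 ∧ z = τ i r y}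

/-- The set `Φ⁺_r(y)` of Bruhat covers of `y` of the form `τⁿ_{r j}(y)` with `r < j`
and `j ∉ {r, y(r)} + nℤ`. -/
def PhiPlus (n : ℕ) (τ : ℤ → ℤ → Equiv.Perm ℤ → Equiv.Perm ℤ)
    (y : Equiv.Perm ℤ) (r : ℤ) : Set (Equiv.Perm ℤ) :=
  {z | BruhatCovI n y z ∧ ∃ j : ℤ, r < j ∧ (j - r) % (n : ℤ) ≠ 0 ∧
    (j - y r) % (n : ℤ) ≠ 0 ∧ z = τ r j y}

/-- The affine symmetric group as a subtype of `Equiv.Perm ℤ`. -/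
abbrev AffPerm (n : ℕ) := {π : Equiv.Perm ℤ // IsAffine n π}

/-- The coproduct `Δ(π) = Σ_{π ≐ π'π''} π' ⊗ π''` on `ℚ S̃_n`. -/
noncomputable def affComul (n : ℕ) :
    (AffPerm n →₀ ℚ) →ₗ[ℚ] TensorProduct ℚ (AffPerm n →₀ ℚ) (AffPerm n →₀ ℚ) :=
  Finsupp.lift _ ℚ _ fun π : AffPerm n =>
    ∑ᶠ p ∈ {p : AffPerm n × AffPerm n |
        p.1.val * p.2.val = π.val ∧
        wordLength n π.val = wordLength n p.1.val + wordLength n p.2.val},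
      (Finsupp.single p.1 (1 : ℚ)) ⊗ₜ[ℚ] (Finsupp.single p.2 (1 : ℚ))

section Aux
open Equiv Finset

variable {n : ℕ}

lemma emodz {x : ℤ} : x % (n:ℤ) = 0 ↔ (n:ℤ) ∣ x :=
  ⟨fun h => Int.dvd_of_emod_eq_zero h, fun h => Int.emod_eq_zero_of_dvd h⟩

lemma one_emod_ne {i : ℤ} (hn : 2 ≤ n) : ¬ ((i+1) - i) % (n:ℤ) = 0 := by
  rw [emodz]
  have h : (i+1) - i = 1 := by ring
  rw [h]
  intro h2
  have := Int.le_of_dvd one_pos h2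
  omega

lemma affS_apply (hn : 2 ≤ n) (i k : ℤ) :
    affS n i k = if (n:ℤ) ∣ (k - i) then k + 1
      else if (n:ℤ) ∣ (k - (i+1)) then k - 1 else k := by
  unfold affS affT
  rw [dif_neg (one_emod_ne hn)]
  show affTFun n i (i+1) k = _
  unfold affTFun
  by_cases h1 : (k - i) % (n:ℤ) = 0
  · rw [if_pos h1, if_pos (emodz.mp h1)]; ring
  · rw [if_neg h1, if_neg (fun h => h1 (emodz.mpr h))]
    by_cases h2 : (k - (i+1)) % (n:ℤ) = 0
    · rw [if_pos h2, if_pos (emodz.mp h2)]; ring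
    · rw [if_neg h2, if_neg (fun h => h2 (emodz.mpr h))]

lemma affS_mul_self (hn : 2 ≤ n) (i : ℤ) : affS n i * affS n i = 1 := by
  ext k
  have h := (affTFun_involutive (one_emod_ne (i := i) hn)) k
  simp only [Equiv.Perm.mul_apply, Equiv.Perm.one_apply]
  show affS n i (affS n i k) = k
  unfold affS affT
  rw [dif_neg (one_emod_ne hn)]
  exact h

lemma affS_inv (hn : 2 ≤ n) (i : ℤ) : (affS n i)⁻¹ = affS n i := by
  rw [inv_eq_iff_mul_eq_one, affS_mul_self hn]

lemma affS_cases (hn : 2 ≤ n) (i k : ℤ) :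
    affS n i k = k + 1 ∨ affS n i k = k - 1 ∨ affS n i k = k := by
  rw [affS_apply hn]; split_ifs <;> simp

lemma IsAffine.one : IsAffine n 1 := ⟨fun _ => rfl, rfl⟩

lemma perm_apply_inv_self (f : Equiv.Perm ℤ) (x : ℤ) : f (f⁻¹ x) = x := by simp

lemma perm_inv_apply_self (f : Equiv.Perm ℤ) (x : ℤ) : f⁻¹ (f x) = x := by simp

/-- periodicity -/
def Per (n : ℕ) (a : Equiv.Perm ℤ) : Prop := ∀ i : ℤ, a (i + n) = a i + n

lemma IsAffine.per {a : Equiv.Perm ℤ} (ha : IsAffine n a) : Per n a := ha.1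

lemma Per.translate {a : Equiv.Perm ℤ} (ha : Per n a) :
    ∀ (k x : ℤ), a (x + k * n) = a x + k * n := by
  have hup : ∀ (m : ℕ) (x : ℤ), a (x + m * n) = a x + m * n := by
    intro m
    induction m with
    | zero => simp
    | succ m ih =>
      intro x
      have h : x + (m+1 : ℕ) * n = (x + m * n) + n := by push_cast; ring
      rw [h, ha, ih]
      push_cast; ring
  intro k x
  rcases le_or_gt 0 k with hk | hk
  · obtain ⟨m, rfl⟩ := Int.eq_ofNat_of_zero_le hk
    exact_mod_cast hup m x
  · obtain ⟨m, rfl⟩ : ∃ m : ℕ, k = -(m:ℤ) := ⟨k.natAbs, by omega⟩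
    have h1 := hup m (x + (-(m:ℤ)) * n)
    have h2 : x + (-(m:ℤ)) * n + (m:ℤ) * n = x := by ring
    rw [h2] at h1
    omega

lemma Per.congr_apply {a : Equiv.Perm ℤ} (ha : Per n a) {x y : ℤ}
    (h : (n:ℤ) ∣ (x - y)) : a x - x = a y - y := by
  obtain ⟨k, hk⟩ := h
  have hx : x = y + k * n := by linarith
  rw [hx, ha.translate k y]; ring

lemma Per.dvd_sub_apply {a : Equiv.Perm ℤ} (ha : Per n a) {x y : ℤ}
    (h : (n:ℤ) ∣ (x - y)) : (n:ℤ) ∣ (a x - a y) := by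
  have h1 := ha.congr_apply h
  have h2 : a x - a y = (x - y) + ((a x - x) - (a y - y)) := by ring
  rw [h2, h1]
  simpa using h

lemma Per.inv {a : Equiv.Perm ℤ} (ha : Per n a) : Per n a⁻¹ := by
  intro i
  apply a.injective
  rw [perm_apply_inv_self, ha (a⁻¹ i), perm_apply_inv_self]

lemma Per.dvd_sub_iff {a : Equiv.Perm ℤ} (ha : Per n a) {x y : ℤ} :
    (n:ℤ) ∣ (a x - a y) ↔ (n:ℤ) ∣ (x - y) := by
  refine ⟨fun h => ?_, ha.dvd_sub_apply⟩
  have := ha.inv.dvd_sub_apply h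
  simpa using this

lemma Per.mul {a b : Equiv.Perm ℤ} (ha : Per n a) (hb : Per n b) : Per n (a * b) := by
  intro i
  simp only [Equiv.Perm.mul_apply, hb i, ha (b i)]

/-- the representative of x in [1,n] -/
def repw (n : ℕ) (x : ℤ) : ℤ := (x - 1) % (n:ℤ) + 1

lemma repw_mem (hn : 0 < n) (x : ℤ) : repw n x ∈ Finset.Icc (1:ℤ) (n:ℤ) := by
  have h1 : 0 ≤ (x - 1) % (n:ℤ) := Int.emod_nonneg _ (by exact_mod_cast hn.ne')
  have h2 : (x - 1) % (n:ℤ) < n := Int.emod_lt_of_pos _ (by exact_mod_cast hn)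
  simp only [repw, Finset.mem_Icc]; omega

lemma repw_dvd (hn : 0 < n) (x : ℤ) : (n:ℤ) ∣ (x - repw n x) := by
  have h := Int.mul_ediv_add_emod (x - 1) (n:ℤ)
  refine ⟨(x-1) / n, ?_⟩
  unfold repw
  omega

lemma repw_eq_of (hn : 0 < n) {x y : ℤ} (h : (n:ℤ) ∣ (x - y)) : repw n x = repw n y := by
  have h2 : (x-1) % (n:ℤ) = (y-1) % (n:ℤ) :=
    Int.ModEq.sub_right 1 (Int.modEq_iff_dvd.mpr (by simpa using dvd_neg.mpr h))
  unfold repw; omega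

lemma repw_self (hn : 0 < n) {x : ℤ} (hx : x ∈ Finset.Icc (1:ℤ) (n:ℤ)) : repw n x = x := by
  simp only [Finset.mem_Icc] at hx
  have h1 : (x - 1) % (n:ℤ) = x - 1 := Int.emod_eq_of_lt (by omega) (by omega)
  unfold repw; omega

/-- sum of (a ∘ c - c) over the window equals sum of (a - id) over the window -/
lemma sum_shift {a c : Equiv.Perm ℤ} (hn : 0 < n) (ha : Per n a) (hc : Per n c) :
    ∑ x ∈ Finset.Icc (1:ℤ) (n:ℤ), (a (c x) - c x) = ∑ x ∈ Finset.Icc (1:ℤ) (n:ℤ), (a x - x) := by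
  refine Finset.sum_nbij' (i := fun x => repw n (c x)) (j := fun u => repw n (c⁻¹ u))
    ?_ ?_ ?_ ?_ ?_
  · intro x hx; exact repw_mem hn _
  · intro u hu; exact repw_mem hn _
  · -- j (i x) = x
    intro x hx
    show repw n (c⁻¹ (repw n (c x))) = x
    have h1 : (n:ℤ) ∣ (repw n (c x) - c x) := by
      have := repw_dvd hn (c x)
      simpa using (dvd_neg.mpr this)
    have h2 : (n:ℤ) ∣ (c⁻¹ (repw n (c x)) - x) := by
      have h3 := hc.inv.dvd_sub_apply h1
      rwa [perm_inv_apply_self] at h3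
    rw [repw_eq_of hn h2, repw_self hn hx]
  · -- i (j u) = u
    intro u hu
    show repw n (c (repw n (c⁻¹ u))) = u
    have h1 : (n:ℤ) ∣ (repw n (c⁻¹ u) - c⁻¹ u) := by
      have := repw_dvd hn (c⁻¹ u)
      simpa using (dvd_neg.mpr this)
    have h2 : (n:ℤ) ∣ (c (repw n (c⁻¹ u)) - u) := by
      have h3 := hc.dvd_sub_apply h1
      rwa [perm_apply_inv_self] at h3
    rw [repw_eq_of hn h2, repw_self hn hu]
  · -- values agree
    intro x hx
    show a (c x) - c x = a (repw n (c x)) - repw n (c x)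
    exact (ha.congr_apply (by simpa using dvd_neg.mpr (repw_dvd hn (c x)))).symm

end Aux
section AuxB
open Equiv Finset
variable {n : ℕ}

lemma sum_window_sub_eq_zero {a : Equiv.Perm ℤ} (ha : IsAffine n a) :
    ∑ x ∈ Finset.Icc (1:ℤ) (n:ℤ), (a x - x) = 0 := by
  rw [Finset.sum_sub_distrib, ha.2, sub_self]

lemma isAffine_of_sum_zero {a : Equiv.Perm ℤ} (hper : Per n a)
    (h : ∑ x ∈ Finset.Icc (1:ℤ) (n:ℤ), (a x - x) = 0) : IsAffine n a := by
  refine ⟨hper, ?_⟩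
  rw [Finset.sum_sub_distrib] at h
  omega

lemma IsAffine.mul {a b : Equiv.Perm ℤ} (hn : 0 < n) (ha : IsAffine n a) (hb : IsAffine n b) :
    IsAffine n (a * b) := by
  refine isAffine_of_sum_zero (ha.per.mul hb.per) ?_
  have key : ∀ x : ℤ, (a * b) x - x = (a (b x) - b x) + (b x - x) := by
    intro x; simp [Equiv.Perm.mul_apply]
  calc ∑ x ∈ Finset.Icc (1:ℤ) (n:ℤ), ((a * b) x - x)
      = ∑ x ∈ Finset.Icc (1:ℤ) (n:ℤ), ((a (b x) - b x) + (b x - x)) := by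
        exact Finset.sum_congr rfl (fun x _ => key x)
    _ = (∑ x ∈ Finset.Icc (1:ℤ) (n:ℤ), (a (b x) - b x)) +
        ∑ x ∈ Finset.Icc (1:ℤ) (n:ℤ), (b x - x) := Finset.sum_add_distrib
    _ = (∑ x ∈ Finset.Icc (1:ℤ) (n:ℤ), (a x - x)) + 0 := by
        rw [sum_shift hn ha.per hb.per, sum_window_sub_eq_zero hb]
    _ = 0 := by rw [sum_window_sub_eq_zero ha, add_zero]

lemma IsAffine.inv {a : Equiv.Perm ℤ} (hn : 0 < n) (ha : IsAffine n a) :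
    IsAffine n a⁻¹ := by
  refine isAffine_of_sum_zero ha.per.inv ?_
  have h := sum_shift (a := a⁻¹) (c := a) hn ha.per.inv ha.per
  have h2 : ∀ x : ℤ, a⁻¹ (a x) - a x = x - a x := by
    intro x; rw [perm_inv_apply_self]
  rw [Finset.sum_congr rfl (fun x _ => h2 x)] at h
  rw [← h]
  have h3 := sum_window_sub_eq_zero ha
  rw [Finset.sum_sub_distrib] at h3 ⊢
  omega

lemma dvd_shift {n : ℕ} {x : ℤ} : (n:ℤ) ∣ (x + n) ↔ (n:ℤ) ∣ x :=
  ⟨fun h => by simpa using h.sub (dvd_refl (n:ℤ)), fun h => h.add (dvd_refl _)⟩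

lemma affS_per (hn : 2 ≤ n) (i : ℤ) : Per n (affS n i) := by
  intro k
  rw [affS_apply hn, affS_apply hn]
  have e1 : k + (n:ℤ) - i = (k - i) + n := by ring
  have e2 : k + (n:ℤ) - (i+1) = (k - (i+1)) + n := by ring
  by_cases h1 : (n:ℤ) ∣ (k - i)
  · rw [if_pos h1, if_pos (show (n:ℤ) ∣ (k + n - i) by rw [e1]; exact dvd_shift.mpr h1)]
    ring
  · rw [if_neg h1, if_neg (show ¬ (n:ℤ) ∣ (k + n - i) by rw [e1]; exact fun h => h1 (dvd_shift.mp h))]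
    by_cases h2 : (n:ℤ) ∣ (k - (i+1))
    · rw [if_pos h2, if_pos (show (n:ℤ) ∣ (k + n - (i+1)) by rw [e2]; exact dvd_shift.mpr h2)]
      ring
    · rw [if_neg h2, if_neg (show ¬ (n:ℤ) ∣ (k + n - (i+1)) by rw [e2]; exact fun h => h2 (dvd_shift.mp h))]

lemma affS_isAffine (hn : 2 ≤ n) (i : ℤ) : IsAffine n (affS n i) := by
  have hn0 : 0 < n := by omega
  refine isAffine_of_sum_zero (affS_per hn i) ?_
  have hri : repw n i ∈ Finset.Icc (1:ℤ) (n:ℤ) := repw_mem hn0 i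
  have hri1 : repw n (i+1) ∈ Finset.Icc (1:ℤ) (n:ℤ) := repw_mem hn0 (i+1)
  have hne : repw n i ≠ repw n (i+1) := by
    intro h
    have d1 := repw_dvd hn0 i
    have d2 := repw_dvd hn0 (i+1)
    rw [h] at d1
    have : (n:ℤ) ∣ 1 := by
      have := d2.sub d1
      simpa using this
    have := Int.le_of_dvd one_pos this
    omega
  have hsub : {repw n i, repw n (i+1)} ⊆ Finset.Icc (1:ℤ) (n:ℤ) := by
    intro x hx
    simp only [Finset.mem_insert, Finset.mem_singleton] at hx
    rcases hx with rfl | rfl <;> assumption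
  rw [← Finset.sum_subset hsub]
  · rw [Finset.sum_pair hne]
    have v1 : affS n i (repw n i) = repw n i + 1 := by
      rw [affS_apply hn, if_pos (by simpa using dvd_neg.mpr (repw_dvd hn0 i))]
    have v2 : affS n i (repw n (i+1)) = repw n (i+1) - 1 := by
      rw [affS_apply hn]
      rw [if_neg, if_pos (by simpa using dvd_neg.mpr (repw_dvd hn0 (i+1)))]
      intro h
      have d2 : (n:ℤ) ∣ (i + 1 - repw n (i+1)) := repw_dvd hn0 (i+1)
      have : (n:ℤ) ∣ 1 := by
        have := h.add d2
        have e : repw n (i+1) - i + (i + 1 - repw n (i+1)) = 1 := by ring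
        rwa [e] at this
      have := Int.le_of_dvd one_pos this
      omega
    rw [v1, v2]; ring
  · intro x hx hnot
    simp only [Finset.mem_insert, Finset.mem_singleton] at hnot
    push_neg at hnot
    have v : affS n i x = x := by
      rw [affS_apply hn]
      rw [if_neg, if_neg]
      · intro h
        apply hnot.2
        have h1 : repw n x = repw n (i+1) := repw_eq_of hn0 h
        rw [repw_self hn0 hx] at h1
        exact h1
      · intro h
        apply hnot.1
        have h1 : repw n x = repw n i := repw_eq_of hn0 h
        rw [repw_self hn0 hx] at h1
        exact h1
    rw [v]; ring
end AuxB
section AuxC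
open Equiv Finset
variable {n : ℕ}

lemma codeEntry_eq (π : Equiv.Perm ℤ) (a : ℤ) :
    codeEntry π a = Set.ncard {j : ℤ | a < j ∧ π j < π a} :=
  (Nat.card_coe_set_eq _).symm

lemma affine_lb {π : Equiv.Perm ℤ} (hn : 0 < n) (hp : Per n π) :
    ∃ C : ℤ, ∀ j : ℤ, j - C ≤ π j := by
  have hne : (Finset.Icc (1:ℤ) (n:ℤ)).Nonempty := ⟨1, by
    simp only [Finset.mem_Icc]
    constructor
    · omega
    · exact_mod_cast hn⟩
  refine ⟨((Finset.Icc (1:ℤ) (n:ℤ)).image (fun x => x - π x)).max' (hne.image _), fun j => ?_⟩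
  have h1 : π j - j = π (repw n j) - repw n j := hp.congr_apply (repw_dvd hn j)
  have h2 := Finset.le_max' ((Finset.Icc (1:ℤ) (n:ℤ)).image (fun x => x - π x))
    (repw n j - π (repw n j)) (Finset.mem_image_of_mem _ (repw_mem hn j))
  omega

lemma invSet_finite {π : Equiv.Perm ℤ} (hn : 0 < n) (hp : Per n π) (b c : ℤ) :
    {j : ℤ | b < j ∧ π j < c}.Finite := by
  obtain ⟨C, hC⟩ := affine_lb hn hp
  apply Set.Finite.subset (Set.finite_Ioo b (c + C))
  rintro j ⟨h1, h2⟩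
  exact Set.mem_Ioo.mpr ⟨h1, by have := hC j; omega⟩

/-- periodicity of codeEntry -/
lemma codeEntry_congr {π : Equiv.Perm ℤ} (hp : Per n π) {a b : ℤ}
    (h : (n:ℤ) ∣ (a - b)) : codeEntry π a = codeEntry π b := by
  obtain ⟨k, hk⟩ := h
  have key : ∀ j : ℤ, π (j + k * n) = π j + k * n := fun j => hp.translate k j
  have ha : a = b + k * n := by linarith
  apply Nat.card_congr
  refine ⟨fun x => ⟨x.1 - k * n, ?_, ?_⟩, fun x => ⟨x.1 + k * n, ?_, ?_⟩, ?_, ?_⟩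
  · have := x.2.1; omega
  · have h2 := x.2.2
    have e : π (x.1 - k * n + k * n) = π x.1 := by congr 1; ring
    have := key (x.1 - k * n)
    rw [e] at this
    have hπa : π a = π b + k * n := by rw [ha, key]
    omega
  · have := x.2.1; omega
  · have h2 := x.2.2
    have := key x.1
    have hπa : π a = π b + k * n := by rw [ha, key]
    omega
  · intro x; ext; simp
  · intro x; ext; simp

/-- image of a set under an involutive permutation -/
lemma invol_image_setOf {s : Equiv.Perm ℤ} (hs : s * s = 1) (P : ℤ → Prop) :
    (⇑s) '' {j | P j} = {j | P (s j)} := by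
  have hss : ∀ x, s (s x) = x := fun x => by
    have := congrArg (fun e => e x) hs; simpa using this
  ext x
  constructor
  · rintro ⟨j, hj, rfl⟩
    simpa [hss] using hj
  · intro hx
    exact ⟨s x, hx, hss x⟩

variable (hn : 2 ≤ n)

section Swaps
variable {i : ℤ} {π : Equiv.Perm ℤ}

lemma affS_apply_of_left (hn : 2 ≤ n) {k : ℤ} (h : (n:ℤ) ∣ (k - i)) : affS n i k = k + 1 := by
  rw [affS_apply hn, if_pos h]

lemma affS_apply_of_right (hn : 2 ≤ n) {k : ℤ} (h : (n:ℤ) ∣ (k - (i+1))) : affS n i k = k - 1 := by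
  rw [affS_apply hn, if_neg, if_pos h]
  intro h2
  have h3 : (n:ℤ) ∣ 1 := by
    have := h2.sub h
    have e : (k - i) - (k - (i+1)) = 1 := by ring
    rwa [e] at this
  have := Int.le_of_dvd one_pos h3
  omega

lemma affS_apply_of_other (hn : 2 ≤ n) {k : ℤ} (h1 : ¬ (n:ℤ) ∣ (k - i))
    (h2 : ¬ (n:ℤ) ∣ (k - (i+1))) : affS n i k = k := by
  rw [affS_apply hn, if_neg h1, if_neg h2]

/-- key identity: codeEntry of π·s via image under s -/
lemma codeEntry_mul_s (hn : 2 ≤ n) (a : ℤ) :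
    codeEntry (π * affS n i) a = Set.ncard {j : ℤ | a < affS n i j ∧ π j < π (affS n i a)} := by
  have hss : ∀ x, affS n i (affS n i x) = x := fun x => by
    have := congrArg (fun e => e x) (affS_mul_self hn i)
    simpa using this
  rw [codeEntry_eq]
  have h0 : {j : ℤ | a < j ∧ (π * affS n i) j < (π * affS n i) a}
      = {j : ℤ | a < j ∧ π (affS n i j) < π (affS n i a)} := rfl
  rw [h0, ← Set.ncard_image_of_injective _ (affS n i).injective,
    invol_image_setOf (affS_mul_self hn i)]
  congr 1
  ext j
  simp only [Set.mem_setOf_eq, hss j]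

/-- K1 : codeEntry unchanged away from i, i+1 -/
lemma codeEntry_mul_s_other (hn : 2 ≤ n) {a : ℤ} (h1 : ¬ (n:ℤ) ∣ (a - i))
    (h2 : ¬ (n:ℤ) ∣ (a - (i+1))) :
    codeEntry (π * affS n i) a = codeEntry π a := by
  rw [codeEntry_mul_s hn, codeEntry_eq, affS_apply_of_other hn h1 h2]
  congr 1
  ext j
  simp only [Set.mem_setOf_eq, and_congr_left_iff]
  intro _
  constructor
  · intro hj
    by_cases hji : (n:ℤ) ∣ (j - i)
    · rw [affS_apply_of_left hn hji] at hj
      have hne : j ≠ a := fun h => h1 (h ▸ hji)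
      omega
    · by_cases hji2 : (n:ℤ) ∣ (j - (i+1))
      · rw [affS_apply_of_right hn hji2] at hj; omega
      · rwa [affS_apply_of_other hn hji hji2] at hj
  · intro hj
    by_cases hji : (n:ℤ) ∣ (j - i)
    · rw [affS_apply_of_left hn hji]; omega
    · by_cases hji2 : (n:ℤ) ∣ (j - (i+1))
      · rw [affS_apply_of_right hn hji2]
        have hne : j ≠ a + 1 := by
          intro h
          apply h1
          have e : a - i = j - (i+1) := by omega
          rw [e]; exact hji2
        omega
      · rwa [affS_apply_of_other hn hji hji2]
end Swaps
end AuxC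
section AuxD
open Equiv Finset
variable {n : ℕ} {i : ℤ} {π : Equiv.Perm ℤ}

/-- K2 : codeEntry at the residue of i -/
lemma codeEntry_mul_s_left (hn : 2 ≤ n) (hp : Per n π) {a : ℤ} (h : (n:ℤ) ∣ (a - i)) :
    codeEntry (π * affS n i) a = codeEntry π (a+1) + (if π a < π (a+1) then 1 else 0) := by
  have hn0 : 0 < n := by omega
  have hsa : affS n i a = a + 1 := affS_apply_of_left hn h
  have hpt : ∀ j : ℤ, a < affS n i j ↔ (j = a ∨ a + 1 < j) := by
    intro j
    constructor
    · intro hj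
      by_cases hji : (n:ℤ) ∣ (j - i)
      · rw [affS_apply_of_left hn hji] at hj
        by_cases hja : j = a
        · left; exact hja
        · right
          -- j ≡ a mod n or not; j > a - 1; need a + 1 < j: j ≥ a, j ≠ a, and j ≠ a+1 since a+1-i ≡ 1
          have hne : j ≠ a + 1 := by
            intro hh
            have : (n:ℤ) ∣ 1 := by
              have := hji.sub h
              rw [hh] at this
              have e : a + 1 - i - (a - i) = 1 := by ring
              rwa [e] at this
            have := Int.le_of_dvd one_pos this
            omega
          -- also j ≠ a is hja; j ≡ i ≡ a mod n so |j - a| ≥ n ≥ 2 or j = a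
          have hd : (n:ℤ) ∣ (j - a) := by
            have := hji.sub h
            have e : j - i - (a - i) = j - a := by ring
            rwa [e] at this
          rcases hd with ⟨k, hk⟩
          have hkne : k ≠ 0 := by intro h0; rw [h0] at hk; apply hja; omega
          rcases lt_or_gt_of_ne hkne with hk0 | hk0
          · nlinarith [hk, hk0]
          · nlinarith [hk, hk0]
      · by_cases hji2 : (n:ℤ) ∣ (j - (i+1))
        · rw [affS_apply_of_right hn hji2] at hj
          right; omega
        · rw [affS_apply_of_other hn hji hji2] at hj
          right
          rcases eq_or_lt_of_le (Int.add_one_le_iff.mpr hj) with he | hlt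
          · exfalso
            apply hji2
            have e : j - (i+1) = (a - i) + (j - a - 1) := by ring
            rw [e, ← he]
            simpa using h
          · exact hlt
    · rintro (rfl | hj)
      · rw [hsa]; omega
      · rcases affS_cases hn i j with hc | hc | hc <;> rw [hc] <;> omega
  by_cases h' : π a < π (a+1)
  · rw [if_pos h', codeEntry_mul_s hn, hsa, codeEntry_eq]
    have hset : {j : ℤ | a < affS n i j ∧ π j < π (a+1)} =
        insert a {j : ℤ | a + 1 < j ∧ π j < π (a+1)} := by
      ext j
      simp only [Set.mem_setOf_eq, Set.mem_insert_iff, hpt j]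
      constructor
      · rintro ⟨rfl | hj, hx⟩
        · left; rfl
        · right; exact ⟨hj, hx⟩
      · rintro (rfl | ⟨hj, hx⟩)
        · exact ⟨Or.inl rfl, h'⟩
        · exact ⟨Or.inr hj, hx⟩
    rw [hset, Set.ncard_insert_of_notMem (by simp) (invSet_finite hn0 hp _ _)]
  · rw [if_neg h', codeEntry_mul_s hn, hsa, codeEntry_eq, add_zero]
    congr 1
    ext j
    simp only [Set.mem_setOf_eq, hpt j]
    constructor
    · rintro ⟨rfl | hj, hx⟩
      · exact absurd hx h'
      · exact ⟨by omega, hx⟩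
    · rintro ⟨hj, hx⟩
      exact ⟨Or.inr hj, hx⟩

/-- K3 : codeEntry at the residue of i+1 -/
lemma codeEntry_mul_s_right (hn : 2 ≤ n) (hp : Per n π) {a : ℤ} (h : (n:ℤ) ∣ (a - (i+1))) :
    codeEntry (π * affS n i) a + (if π a < π (a-1) then 1 else 0) = codeEntry π (a-1) := by
  have hn0 : 0 < n := by omega
  have hsa : affS n i a = a - 1 := affS_apply_of_right hn h
  have hpt : ∀ j : ℤ, a < affS n i j ↔ a < j := by
    intro j
    constructor
    · intro hj
      by_cases hji : (n:ℤ) ∣ (j - i)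
      · rw [affS_apply_of_left hn hji] at hj
        rcases eq_or_lt_of_le (by omega : a ≤ j) with he | hlt
        · exfalso
          apply absurd (hji.sub h)
          rw [← he]
          intro hd
          have e : a - i - (a - (i+1)) = 1 := by ring
          rw [e] at hd
          have := Int.le_of_dvd one_pos hd
          omega
        · exact hlt
      · by_cases hji2 : (n:ℤ) ∣ (j - (i+1))
        · rw [affS_apply_of_right hn hji2] at hj
          omega
        · rwa [affS_apply_of_other hn hji hji2] at hj
    · intro hj
      by_cases hji : (n:ℤ) ∣ (j - i)
      · rw [affS_apply_of_left hn hji]; omega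
      · by_cases hji2 : (n:ℤ) ∣ (j - (i+1))
        · rw [affS_apply_of_right hn hji2]
          rcases eq_or_lt_of_le (Int.add_one_le_iff.mpr hj) with he | hlt
          · exfalso
            apply hji
            have e : j - i = (j - (i+1)) + 1 := by ring
            have hd := hji2.sub h
            have e2 : j - (i+1) - (a - (i+1)) = j - a := by ring
            rw [e2, ← he] at hd
            have : (n:ℤ) ∣ 1 := by simpa using hd
            have := Int.le_of_dvd one_pos this
            omega
          · omega
        · rw [affS_apply_of_other hn hji hji2]; exact hj
  rw [codeEntry_mul_s hn, hsa, codeEntry_eq]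
  have hset : {j : ℤ | a < affS n i j ∧ π j < π (a-1)} =
      {j : ℤ | a - 1 < j ∧ π j < π (a-1)} \ {a} := by
    ext j
    simp only [Set.mem_setOf_eq, Set.mem_diff, Set.mem_singleton_iff, hpt j]
    omega
  rw [hset]
  by_cases h' : π a < π (a-1)
  · rw [if_pos h']
    exact Set.ncard_diff_singleton_add_one (by simp only [Set.mem_setOf_eq]; exact ⟨by omega, h'⟩)
      (invSet_finite hn0 hp _ _)
  · rw [if_neg h', add_zero, Set.diff_singleton_eq_self]
    simp only [Set.mem_setOf_eq]
    intro hc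
    exact h' hc.2
end AuxD
section AuxE
open Equiv Finset
variable {n : ℕ} {π : Equiv.Perm ℤ}

/-- total number of window inversions -/
noncomputable def NN (n : ℕ) (π : Equiv.Perm ℤ) : ℕ :=
  ∑ a ∈ Finset.Icc (1:ℤ) (n:ℤ), codeEntry π a

lemma NN_mul_s (hn : 2 ≤ n) (hp : IsAffine n π) {i : ℤ} (hi : i ∈ Finset.Icc (1:ℤ) (n:ℤ)) :
    NN n (π * affS n i) + (if π (i+1) < π i then 1 else 0)
      = NN n π + (if π i < π (i+1) then 1 else 0) := by
  have hn0 : 0 < n := by omega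
  set v := repw n (i+1) with hv
  have hvmem : v ∈ Finset.Icc (1:ℤ) (n:ℤ) := repw_mem hn0 _
  have hvd : (n:ℤ) ∣ (v - (i+1)) := by simpa using dvd_neg.mpr (repw_dvd hn0 (i+1))
  have hiv : i ≠ v := by
    intro h
    have : (n:ℤ) ∣ 1 := by
      have := hvd
      rw [← h] at this
      have e : i - (i+1) = -1 := by ring
      rw [e] at this
      simpa using this.neg_right
    have := Int.le_of_dvd one_pos this
    omega
  have hpair : ({i, v} : Finset ℤ) ⊆ Finset.Icc (1:ℤ) (n:ℤ) := by
    intro x hx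
    simp only [Finset.mem_insert, Finset.mem_singleton] at hx
    rcases hx with rfl | rfl <;> assumption
  have hrest : ∀ a ∈ Finset.Icc (1:ℤ) (n:ℤ) \ {i, v},
      codeEntry (π * affS n i) a = codeEntry π a := by
    intro a ha
    simp only [Finset.mem_sdiff, Finset.mem_insert, Finset.mem_singleton] at ha
    push_neg at ha
    refine codeEntry_mul_s_other hn ?_ ?_
    · intro hd
      apply ha.2.1
      have h1 : repw n a = repw n i := repw_eq_of hn0 hd
      rw [repw_self hn0 ha.1, repw_self hn0 hi] at h1
      exact h1
    · intro hd
      apply ha.2.2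
      have h1 : repw n a = repw n (i+1) := repw_eq_of hn0 hd
      rw [repw_self hn0 ha.1] at h1
      exact h1
  have split : ∀ f : ℤ → ℕ, ∑ a ∈ Finset.Icc (1:ℤ) (n:ℤ), f a
      = ∑ a ∈ Finset.Icc (1:ℤ) (n:ℤ) \ {i, v}, f a + (f i + f v) := by
    intro f
    rw [← Finset.sum_pair hiv, Finset.sum_sdiff hpair]
  have c1 := codeEntry_mul_s_left (i := i) hn hp.per (a := i) (by simp)
  have c2 := codeEntry_mul_s_right (i := i) hn hp.per (a := v) hvd
  have t1 : codeEntry π (i+1) = codeEntry π v := codeEntry_congr hp.per (by simpa using dvd_neg.mpr hvd)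
  have t2 : codeEntry π (v-1) = codeEntry π i := codeEntry_congr hp.per (by
    have e : v - 1 - i = v - (i+1) := by ring
    rw [e]; exact hvd)
  have t3 : (π v < π (v-1)) ↔ (π (i+1) < π i) := by
    have e1 : π v - v = π (i+1) - (i+1) := hp.per.congr_apply hvd
    have e2 : π (v-1) - (v-1) = π i - i := hp.per.congr_apply (by
      have e : v - 1 - i = v - (i+1) := by ring
      rw [e]; exact hvd)
    omega
  have hR : ∑ a ∈ Finset.Icc (1:ℤ) (n:ℤ) \ {i, v}, codeEntry (π * affS n i) a
      = ∑ a ∈ Finset.Icc (1:ℤ) (n:ℤ) \ {i, v}, codeEntry π a :=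
    Finset.sum_congr rfl hrest
  have hs1 := split (fun a => codeEntry (π * affS n i) a)
  have hs2 := split (fun a => codeEntry π a)
  rw [NN, NN, hs1, hs2, hR]
  have hne : π i ≠ π (i+1) := fun h => by
    have := π.injective h; omega
  rcases lt_or_gt_of_ne hne with hlt | hgt
  · have hgt' : ¬ π (i+1) < π i := by omega
    rw [if_pos hlt] at c1
    rw [if_neg (by rw [t3]; omega)] at c2
    rw [if_neg hgt', if_pos hlt]
    omega
  · have hgt' : π (i+1) < π i := hgt
    rw [if_neg (by omega)] at c1
    rw [if_pos (by rw [t3]; omega)] at c2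
    rw [if_pos hgt', if_neg (by omega)]
    omega

/-- no descent in the window implies identity -/
lemma eq_one_of_no_descent (hn : 0 < n) (hp : IsAffine n π)
    (h : ∀ i ∈ Finset.Icc (1:ℤ) (n:ℤ), ¬ π (i+1) < π i) : π = 1 := by
  have hasc : ∀ k : ℤ, π k < π (k + 1) := by
    intro k
    have hu : repw n k ∈ Finset.Icc (1:ℤ) (n:ℤ) := repw_mem hn k
    have h1 : π k - k = π (repw n k) - repw n k :=
      hp.per.congr_apply (repw_dvd hn k)
    have h2 : π (k+1) - (k+1) = π (repw n k + 1) - (repw n k + 1) :=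
      hp.per.congr_apply (by
        have e : k + 1 - (repw n k + 1) = k - repw n k := by ring
        rw [e]; exact repw_dvd hn k)
    have h3 := h _ hu
    have hne : π (repw n k) ≠ π (repw n k + 1) := fun hh => by
      have := π.injective hh; omega
    omega
  have hmono : StrictMono (⇑π) := strictMono_int_of_lt_succ hasc
  have hsucc : ∀ k : ℤ, π (k + 1) = π k + 1 := by
    intro k
    by_contra hne
    have hgt : π k + 1 < π (k+1) := by
      have := hasc k; omega
    obtain ⟨m, hm⟩ := π.surjective (π k + 1)
    have hm1 : k < m := by
      by_contra hc
      push_neg at hc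
      have := hmono.le_iff_le.mpr hc
      omega
    have hm2 : m < k + 1 := by
      by_contra hc
      push_neg at hc
      have := hmono.le_iff_le.mpr hc
      omega
    omega
  have htrans : ∀ k : ℤ, π k = k + π 0 := by
    intro k
    induction k using Int.induction_on with
    | zero => simp
    | succ m ih => rw [(by push_cast; ring : ((m:ℤ)+1) = (m:ℤ) + 1), hsucc, ih]; ring
    | pred m ih =>
      have h2 := hsucc (-(m:ℤ) - 1)
      have e : -(m:ℤ) - 1 + 1 = -(m:ℤ) := by ring
      rw [e] at h2
      omega
  have hzero : π 0 = 0 := by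
    have hsum := sum_window_sub_eq_zero hp
    have : ∀ x ∈ Finset.Icc (1:ℤ) (n:ℤ), π x - x = π 0 := fun x _ => by rw [htrans]; ring
    rw [Finset.sum_congr rfl this, Finset.sum_const] at hsum
    have hcard : (Finset.Icc (1:ℤ) (n:ℤ)).card = n := by
      rw [Int.card_Icc]
      omega
    rw [hcard] at hsum
    have : (n:ℤ) * π 0 = 0 := by
      simpa [nsmul_eq_mul] using hsum
    have hn' : (n:ℤ) ≠ 0 := by exact_mod_cast hn.ne'
    exact mul_eq_zero.mp this |>.resolve_left hn'
  ext k
  rw [htrans, hzero]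
  simp
end AuxE
section AuxF
open Equiv Finset
variable {n : ℕ} {π : Equiv.Perm ℤ}

def validW (n : ℕ) (w : List ℤ) : Prop := ∀ x ∈ w, 1 ≤ x ∧ x ≤ (n:ℤ)

lemma wordLength_le {w : List ℤ} (hw : validW n w) (hp : (w.map (affS n)).prod = π) :
    wordLength n π ≤ w.length :=
  Nat.sInf_le ⟨w, hw, hp, rfl⟩

lemma prod_valid_affine (hn : 2 ≤ n) {w : List ℤ} (hw : validW n w) :
    IsAffine n (w.map (affS n)).prod := by
  induction w with
  | nil => exact IsAffine.one
  | cons x w ih =>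
    rw [List.map_cons, List.prod_cons]
    exact IsAffine.mul (by omega) (affS_isAffine hn x)
      (ih (fun y hy => hw y (List.mem_cons_of_mem x hy)))

/-- existence of a word of length ≤ NN -/
lemma exists_word (hn : 2 ≤ n) (hp : IsAffine n π) :
    ∃ w : List ℤ, validW n w ∧ (w.map (affS n)).prod = π ∧ w.length ≤ NN n π := by
  have hn0 : 0 < n := by omega
  generalize hN : NN n π = N
  induction N using Nat.strong_induction_on generalizing π with
  | _ N ih =>
    by_cases h1 : π = 1
    · exact ⟨[], fun x hx => absurd hx (List.not_mem_nil), by simp [h1], by simp⟩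
    · have hdesc : ∃ i ∈ Finset.Icc (1:ℤ) (n:ℤ), π (i+1) < π i := by
        by_contra hc
        push_neg at hc
        exact h1 (eq_one_of_no_descent hn0 hp (fun i hi => by have := hc i hi; omega))
      obtain ⟨i, hi, hdi⟩ := hdesc
      have key := NN_mul_s hn hp hi
      rw [if_pos hdi, if_neg (by omega)] at key
      have hσ : IsAffine n (π * affS n i) := IsAffine.mul hn0 hp (affS_isAffine hn i)
      have hNσ : NN n (π * affS n i) < N := by omega
      obtain ⟨w, hw, hwp, hwl⟩ := ih _ hNσ hσ rfl
      refine ⟨w ++ [i], ?_, ?_, ?_⟩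
      · intro x hx
        rcases List.mem_append.mp hx with hx | hx
        · exact hw x hx
        · simp only [List.mem_singleton] at hx
          subst hx
          simpa using (Finset.mem_Icc.mp hi)
      · rw [List.map_append, List.prod_append]
        simp only [List.map_cons, List.map_nil, List.prod_cons, List.prod_nil, mul_one]
        rw [hwp, mul_assoc, affS_mul_self hn, mul_one]
      · simp only [List.length_append, List.length_singleton]
        omega

lemma NN_le_word (hn : 2 ≤ n) {w : List ℤ} (hw : validW n w) :
    NN n (w.map (affS n)).prod ≤ w.length := by
  induction w using List.reverseRecOn with
  | nil =>
    simp only [List.map_nil, List.prod_nil, List.length_nil, Nat.le_zero]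
    rw [NN]
    apply Finset.sum_eq_zero
    intro a ha
    rw [codeEntry_eq]
    convert Set.ncard_empty ℤ
    ext j
    simp only [Set.mem_setOf_eq, Set.mem_empty_iff_false, iff_false]
    rintro ⟨h1, h2⟩
    simp only [Equiv.Perm.one_apply] at h2
    omega
  | append_singleton w x ih =>
    have hw' : validW n w := fun y hy => hw y (List.mem_append_left _ hy)
    have hx : 1 ≤ x ∧ x ≤ (n:ℤ) := hw x (List.mem_append_right _ (List.mem_singleton_self x))
    rw [List.map_append, List.prod_append]
    simp only [List.map_cons, List.map_nil, List.prod_cons, List.prod_nil, mul_one]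
    have key := NN_mul_s hn (prod_valid_affine hn hw') (i := x)
      (Finset.mem_Icc.mpr hx)
    have := ih hw'
    simp only [List.length_append, List.length_singleton]
    split_ifs at key <;> omega

/-- the fundamental length formula -/
lemma wordLength_eq_NN (hn : 2 ≤ n) (hp : IsAffine n π) : wordLength n π = NN n π := by
  obtain ⟨w, hw, hwp, hwl⟩ := exists_word hn hp
  have hle : wordLength n π ≤ NN n π := le_trans (wordLength_le hw hwp) hwl
  have hne : {l : ℕ | ∃ w : List ℤ, validW n w ∧ (w.map (affS n)).prod = π ∧ w.length = l}.Nonempty :=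
    ⟨w.length, w, hw, hwp, rfl⟩
  obtain ⟨w', hw', hw'p, hw'l⟩ := Nat.sInf_mem hne
  have : NN n π ≤ wordLength n π := by
    rw [show wordLength n π = sInf _ from rfl]
    rw [← hw'p] at *
    calc NN n (List.prod (List.map (affS n) w')) ≤ w'.length := NN_le_word hn hw'
      _ = _ := hw'l
  omega
end AuxF
section AuxG
open Equiv Finset
variable {n : ℕ} {π : Equiv.Perm ℤ}

lemma wordLength_one : wordLength n 1 = 0 :=
  Nat.le_zero.mp (wordLength_le (w := []) (fun x hx => absurd hx (List.not_mem_nil)) (by simp))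

lemma codeEntry_pos (hn : 2 ≤ n) (hp : IsAffine n π) {i : ℤ} (hd : π (i+1) < π i) :
    0 < codeEntry π i := by
  rw [codeEntry_eq]
  refine Set.ncard_pos (invSet_finite (by omega) hp.per _ _) |>.mpr ⟨i+1, by
    simp only [Set.mem_setOf_eq]; exact ⟨by omega, hd⟩⟩

lemma eq_one_of_wordLength_zero (hn : 2 ≤ n) (hp : IsAffine n π)
    (h : wordLength n π = 0) : π = 1 := by
  rw [wordLength_eq_NN hn hp] at h
  apply eq_one_of_no_descent (by omega) hp
  intro i hi hd
  have h1 : 0 < codeEntry π i := codeEntry_pos hn hp hd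
  have h2 : codeEntry π i ≤ NN n π := Finset.single_le_sum (f := fun a => codeEntry π a)
    (fun a _ => Nat.zero_le _) hi
  omega

lemma wordLength_desc (hn : 2 ≤ n) (hp : IsAffine n π) {i : ℤ}
    (hi : i ∈ Finset.Icc (1:ℤ) (n:ℤ)) (hd : π (i+1) < π i) :
    wordLength n (π * affS n i) + 1 = wordLength n π := by
  have key := NN_mul_s hn hp hi
  rw [if_pos hd, if_neg (by omega)] at key
  rw [wordLength_eq_NN hn hp, wordLength_eq_NN hn (IsAffine.mul (by omega) hp (affS_isAffine hn i))]
  omega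

lemma wordLength_asc (hn : 2 ≤ n) (hp : IsAffine n π) {i : ℤ}
    (hi : i ∈ Finset.Icc (1:ℤ) (n:ℤ)) (hd : π i < π (i+1)) :
    wordLength n (π * affS n i) = wordLength n π + 1 := by
  have key := NN_mul_s hn hp hi
  rw [if_pos hd, if_neg (by omega)] at key
  rw [wordLength_eq_NN hn hp, wordLength_eq_NN hn (IsAffine.mul (by omega) hp (affS_isAffine hn i))]
  omega

lemma prod_reverse_eq_inv (hn : 2 ≤ n) (w : List ℤ) :
    ((w.reverse.map (affS n)).prod) = ((w.map (affS n)).prod)⁻¹ := by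
  induction w with
  | nil => simp
  | cons x w ih =>
    simp only [List.reverse_cons, List.map_append, List.prod_append, List.map_cons,
      List.map_nil, List.prod_cons, List.prod_nil, mul_one]
    rw [ih, mul_inv_rev, affS_inv hn]

lemma wordLength_inv (hn : 2 ≤ n) (hp : IsAffine n π) :
    wordLength n π⁻¹ = wordLength n π := by
  have key : ∀ σ : Equiv.Perm ℤ, IsAffine n σ → wordLength n σ⁻¹ ≤ wordLength n σ := by
    intro σ hσ
    obtain ⟨w, hw, hwp, _⟩ := exists_word hn hσ
    have hne : {l : ℕ | ∃ w : List ℤ, validW n w ∧ (w.map (affS n)).prod = σ ∧ w.length = l}.Nonempty :=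
      ⟨w.length, w, hw, hwp, rfl⟩
    obtain ⟨w', hw', hw'p, hw'l⟩ := Nat.sInf_mem hne
    have : wordLength n σ⁻¹ ≤ w'.reverse.length :=
      wordLength_le (fun x hx => hw' x (List.mem_reverse.mp hx))
        (by rw [prod_reverse_eq_inv hn, hw'p])
    rw [List.length_reverse, hw'l] at this; exact this
  have h1 := key π hp
  have h2 := key π⁻¹ (hp.inv (by omega))
  rw [inv_inv] at h2
  omega

lemma wordLength_s (hn : 2 ≤ n) {i : ℤ} (hi : i ∈ Finset.Icc (1:ℤ) (n:ℤ)) :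
    wordLength n (affS n i) = 1 := by
  have hle : wordLength n (affS n i) ≤ 1 := by
    have := wordLength_le (n := n) (π := affS n i) (w := [i]) (fun x hx => by
      simp only [List.mem_singleton] at hx
      subst hx
      exact Finset.mem_Icc.mp hi) (by simp)
    simpa using this
  have hne : affS n i ≠ 1 := by
    intro h
    have : affS n i i = i := by rw [h]; rfl
    rw [affS_apply_of_left hn (by simp)] at this
    omega
  have : wordLength n (affS n i) ≠ 0 := fun h =>
    hne (eq_one_of_wordLength_zero hn (affS_isAffine hn i) h)
  omega

/-- parity/steps: multiplying by s changes length by exactly one -/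
lemma wordLength_step (hn : 2 ≤ n) (hp : IsAffine n π) {i : ℤ}
    (hi : i ∈ Finset.Icc (1:ℤ) (n:ℤ)) :
    wordLength n (π * affS n i) + 1 = wordLength n π ∨
    wordLength n (π * affS n i) = wordLength n π + 1 := by
  have hne : π i ≠ π (i+1) := fun h => by have := π.injective h; omega
  rcases lt_or_gt_of_ne hne with h | h
  · right; exact wordLength_asc hn hp hi h
  · left; exact wordLength_desc hn hp hi h

/-- descent selection: a nonidentity affine permutation has a window descent -/
lemma exists_desc (hn : 2 ≤ n) (hp : IsAffine n π) (hne : π ≠ 1) :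
    ∃ i ∈ Finset.Icc (1:ℤ) (n:ℤ), π (i+1) < π i := by
  by_contra hc
  push_neg at hc
  exact hne (eq_one_of_no_descent (by omega) hp (fun i hi => by have := hc i hi; omega))
end AuxG
section AuxH
open Equiv Finset
variable {n : ℕ}

/-- reduction of an (affine) permutation modulo n -/
def barF (n : ℕ) (z : Equiv.Perm ℤ) : ZMod n → ZMod n :=
  fun a => (((z (a.val : ℤ)) : ℤ) : ZMod n)

lemma lprime_eq (z : Equiv.Perm ℤ) :
    lprime n z = n - Nat.card (Quot fun a b : ZMod n => barF n z a = b) := rfl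

section casts
variable [NeZero n]

lemma castval (a : ZMod n) : ((a.val : ℤ) : ZMod n) = a := by
  rw [Int.cast_natCast]
  exact ZMod.natCast_rightInverse a

lemma intCast_eq_iff_dvd (x y : ℤ) : ((x : ZMod n) = (y : ZMod n)) ↔ (n:ℤ) ∣ (y - x) := by
  rw [ZMod.intCast_eq_intCast_iff]
  exact Int.modEq_iff_dvd

lemma barF_cast {z : Equiv.Perm ℤ} (hz : Per n z) (x : ℤ) :
    ((z x : ℤ) : ZMod n) = barF n z ((x : ZMod n)) := by
  have h1 : ((((x : ZMod n)).val : ℤ) : ZMod n) = ((x : ZMod n)) := castval _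
  have h2 : (n:ℤ) ∣ (x - (((x : ZMod n)).val : ℤ)) := by
    rw [← intCast_eq_iff_dvd]
    exact h1
  have h3 : (n:ℤ) ∣ (z x - z (((x : ZMod n)).val : ℤ)) := hz.dvd_sub_apply h2
  rw [barF]
  rw [intCast_eq_iff_dvd]
  simpa using dvd_neg.mpr h3

lemma barF_comp {a b : Equiv.Perm ℤ} (ha : Per n a) (hb : Per n b) (x : ZMod n) :
    barF n (a * b) x = barF n a (barF n b x) := by
  show (((a (b (x.val : ℤ))) : ℤ) : ZMod n) = _
  rw [barF_cast ha (b (x.val : ℤ))]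
  congr 1

lemma barF_one_apply (x : ZMod n) : barF n 1 x = x := castval x

lemma barF_inj {z : Equiv.Perm ℤ} (hz : Per n z) : Function.Injective (barF n z) := by
  intro a b h
  rw [barF, barF, intCast_eq_iff_dvd] at h
  have h2 := hz.inv.dvd_sub_apply h
  simp only [perm_inv_apply_self] at h2
  have h3 : ((b.val : ℤ) : ZMod n) = ((a.val : ℤ) : ZMod n) := by
    rw [intCast_eq_iff_dvd]
    simpa using dvd_neg.mpr h2
  rw [castval, castval] at h3
  exact h3.symm

end casts

/-- number of orbit classes of a self-map -/
noncomputable def QC (f : ZMod n → ZMod n) : ℕ := Nat.card (Quot fun a b => f a = b)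

lemma QC_congr {f g : ZMod n → ZMod n} (h : ∀ a, f a = g a) : QC f = QC g := by
  have : f = g := funext h
  rw [QC, QC, this]

lemma quot_finite {α : Type*} [Finite α] (r : α → α → Prop) : Finite (Quot r) :=
  Finite.of_surjective (Quot.mk r) (fun q => Quot.exists_rep q)

lemma QC_le (hn : 0 < n) (f : ZMod n → ZMod n) : QC f ≤ n := by
  haveI : NeZero n := ⟨hn.ne'⟩
  have h : Function.Surjective (Quot.mk (fun a b : ZMod n => f a = b)) :=
    fun q => Quot.exists_rep q
  have h2 := Nat.card_le_card_of_surjective _ h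
  rw [Nat.card_zmod] at h2
  exact h2

lemma QC_pos (hn : 0 < n) (f : ZMod n → ZMod n) : 0 < QC f := by
  haveI : NeZero n := ⟨hn.ne'⟩
  haveI : Finite (Quot fun a b => f a = b) := quot_finite _
  haveI : Nonempty (Quot fun a b => f a = b) := ⟨Quot.mk _ 0⟩
  exact Nat.card_pos

lemma QC_id (hn : 0 < n) : QC (n := n) (fun a => a) = n := by
  haveI : NeZero n := ⟨hn.ne'⟩
  have e : (Quot fun a b : ZMod n => a = b) ≃ ZMod n := by
    refine ⟨Quot.lift id (fun a b h => h), Quot.mk _, ?_, fun a => rfl⟩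
    intro q
    induction q using Quot.ind with
    | _ a => rfl
  rw [QC, Nat.card_congr e, Nat.card_zmod]

lemma QC_conj (f : ZMod n → ZMod n) (c : Equiv.Perm (ZMod n)) :
    QC (fun a => c (f (c.symm a))) = QC f := by
  have e : (Quot fun a b : ZMod n => f a = b) ≃
      (Quot fun a b : ZMod n => c (f (c.symm a)) = b) := by
    refine Quot.congr c ?_
    intro a b
    simp only [Equiv.symm_apply_apply]
    exact ⟨fun h => by rw [h], fun h => c.injective h⟩
  rw [QC, QC, ← Nat.card_congr e]

lemma QC_merge (hn : 0 < n) {f : ZMod n → ZMod n} (hfi : Function.Injective f)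
    {u v : ZMod n} (huv : u ≠ v) (hfu : f u = u) (hfv : f v = v) :
    QC (fun a => f (Equiv.swap u v a)) + 1 = QC f := by
  haveI : NeZero n := ⟨hn.ne'⟩
  classical
  set rf : ZMod n → ZMod n → Prop := fun a b => f a = b with hrf
  set rg : ZMod n → ZMod n → Prop := fun a b => f (Equiv.swap u v a) = b with hrg
  have hsep : ∀ b : ZMod n, Quot.mk rf b = Quot.mk rf v → b = v := by
    intro b hb
    have hinv : ∀ (x y : ZMod n), rf x y → ((x = v) = (y = v)) := by
      intro x y hxy
      replace hxy : f x = y := hxy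
      apply propext
      constructor
      · rintro rfl
        rw [← hxy, hfv]
      · rintro rfl
        exact hfi (hxy.trans hfv.symm)
    have := congrArg (Quot.lift (fun x => x = v) hinv) hb
    simpa using this
  have hφ0 : ∀ x y : ZMod n, rg x y →
      (if x = v then Quot.mk rf u else Quot.mk rf x) =
      (if y = v then Quot.mk rf u else Quot.mk rf y) := by
    intro x y hxy
    replace hxy : f (Equiv.swap u v x) = y := hxy
    by_cases hxv : x = v
    · have hs : Equiv.swap u v x = u := by rw [hxv]; exact Equiv.swap_apply_right u v
      rw [hs, hfu] at hxy
      rw [if_pos hxv, if_neg (show ¬ y = v by rw [← hxy]; exact huv), ← hxy]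
    · by_cases hxu : x = u
      · have hs : Equiv.swap u v x = v := by rw [hxu]; exact Equiv.swap_apply_left u v
        rw [hs, hfv] at hxy
        rw [if_neg hxv, if_pos hxy.symm, hxu]
      · have hs : Equiv.swap u v x = x := Equiv.swap_apply_of_ne_of_ne hxu hxv
        rw [hs] at hxy
        have hyv : ¬ y = v := fun hy => hxv (hfi (by rw [hxy, hy, hfv]))
        rw [if_neg hxv, if_neg hyv]
        exact Quot.sound (show rf x y from hxy)
  have hψ0 : ∀ x y : ZMod n, rf x y → Quot.mk rg x = Quot.mk rg y := by
    intro x y hxy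
    replace hxy : f x = y := hxy
    by_cases hxu : x = u
    · have : y = x := by rw [hxu] at hxy ⊢; rw [← hxy, hfu]
      rw [this]
    · by_cases hxv : x = v
      · have : y = x := by rw [hxv] at hxy ⊢; rw [← hxy, hfv]
        rw [this]
      · exact Quot.sound (show rg x y by
          show f (Equiv.swap u v x) = y
          rw [Equiv.swap_apply_of_ne_of_ne hxu hxv]; exact hxy)
  have hφne : ∀ x : ZMod n, ¬ (if x = v then Quot.mk rf u else Quot.mk rf x) = Quot.mk rf v := by
    intro x
    by_cases hxv : x = v
    · rw [if_pos hxv]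
      exact fun h => huv (hsep u h)
    · rw [if_neg hxv]
      exact fun h => hxv (hsep x h)
  have hguv : rg u v := by
    show f (Equiv.swap u v u) = v
    rw [Equiv.swap_apply_left]
    exact hfv
  have e : Quot rg ≃ {x : Quot rf // ¬ x = Quot.mk rf v} := by
    refine ⟨fun q => ⟨Quot.lift (fun x => if x = v then Quot.mk rf u else Quot.mk rf x) hφ0 q, ?_⟩,
      fun x => Quot.lift (Quot.mk rg) hψ0 x.1, ?_, ?_⟩
    · obtain ⟨x, rfl⟩ := Quot.exists_rep q
      simpa only [Quot.lift_mk] using hφne x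
    · intro q
      obtain ⟨x, rfl⟩ := Quot.exists_rep q
      simp only [Quot.lift_mk]
      by_cases hxv : x = v
      · rw [if_pos hxv]
        simp only [Quot.lift_mk]
        rw [hxv]
        exact Quot.sound hguv
      · rw [if_neg hxv]
    · rintro ⟨q, hq⟩
      obtain ⟨b, rfl⟩ := Quot.exists_rep q
      have hbv : ¬ b = v := fun h => hq (by rw [h])
      apply Subtype.ext
      simp only [Quot.lift_mk]
      rw [if_neg hbv]
  haveI hFin : Finite (Quot rf) := quot_finite rf
  have h1 : QC (fun a => f (Equiv.swap u v a)) = Nat.card {x : Quot rf // ¬ x = Quot.mk rf v} :=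
    Nat.card_congr e
  have h2 : Nat.card (Quot rf) =
      Nat.card ({x : Quot rf // x = Quot.mk rf v} ⊕ {x : Quot rf // ¬ x = Quot.mk rf v}) :=
    Nat.card_congr (Equiv.sumCompl (fun x : Quot rf => x = Quot.mk rf v)).symm
  rw [Nat.card_sum] at h2
  haveI : Unique {x : Quot rf // x = Quot.mk rf v} :=
    ⟨⟨⟨Quot.mk rf v, rfl⟩⟩, by rintro ⟨x, rfl⟩; rfl⟩
  have h3 : Nat.card {x : Quot rf // x = Quot.mk rf v} = 1 := Nat.card_unique
  have h4 : QC f = Nat.card (Quot rf) := rfl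
  omega

end AuxH
section AuxI
open Equiv Finset
variable {n : ℕ}

lemma lprime_one (hn : 0 < n) : lprime n (1 : Equiv.Perm ℤ) = 0 := by
  haveI : NeZero n := ⟨hn.ne'⟩
  rw [lprime_eq]
  have h : QC (barF n 1) = n := by
    rw [QC_congr (fun a => barF_one_apply a)]
    exact QC_id hn
  rw [QC] at h
  omega

lemma barF_s_invol (hn : 2 ≤ n) (i : ℤ) (a : ZMod n) :
    barF n (affS n i) (barF n (affS n i) a) = a := by
  haveI : NeZero n := ⟨by omega⟩
  rw [← barF_comp (affS_per hn i) (affS_per hn i), affS_mul_self hn, barF_one_apply]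

/-- the reduction of s_i is the swap of the residues of i and i+1 -/
lemma barF_s_eq_swap (hn : 2 ≤ n) (i : ℤ) (a : ZMod n) :
    barF n (affS n i) a = Equiv.swap ((i : ZMod n)) (((i+1 : ℤ) : ZMod n)) a := by
  haveI : NeZero n := ⟨by omega⟩
  have huv : ((i : ZMod n)) ≠ (((i+1 : ℤ) : ZMod n)) := by
    intro h
    rw [intCast_eq_iff_dvd] at h
    have h2 : (n:ℤ) ∣ 1 := by simpa using h
    have := Int.le_of_dvd one_pos h2
    omega
  by_cases h1 : (n:ℤ) ∣ ((a.val : ℤ) - i)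
  · have ha : a = (i : ZMod n) := by
      rw [← castval a, intCast_eq_iff_dvd]
      simpa using dvd_neg.mpr h1
    rw [ha, Equiv.swap_apply_left]
    show (((affS n i ((((i : ZMod n)).val : ℤ))) : ℤ) : ZMod n) = _
    have hd : (n:ℤ) ∣ (((((i : ZMod n)).val : ℤ)) - i) := by
      rw [← intCast_eq_iff_dvd, castval]
    rw [affS_apply_of_left hn hd]
    rw [intCast_eq_iff_dvd]
    have : (i + 1 - ((((i : ZMod n)).val : ℤ) + 1)) = i - (((i : ZMod n)).val : ℤ) := by ring
    rw [this]
    simpa using dvd_neg.mpr hd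
  · by_cases h2 : (n:ℤ) ∣ ((a.val : ℤ) - (i+1))
    · have ha : a = ((i+1 : ℤ) : ZMod n) := by
        rw [← castval a, intCast_eq_iff_dvd]
        simpa using dvd_neg.mpr h2
      rw [ha, Equiv.swap_apply_right]
      show (((affS n i ((((((i+1:ℤ)) : ZMod n)).val : ℤ))) : ℤ) : ZMod n) = _
      have hd : (n:ℤ) ∣ ((((((i+1:ℤ) : ZMod n)).val : ℤ)) - (i+1)) := by
        rw [← intCast_eq_iff_dvd, castval]
      rw [affS_apply_of_right hn hd]
      rw [intCast_eq_iff_dvd]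
      have e : (i - ((((((i+1:ℤ)) : ZMod n)).val : ℤ) - 1)) = (i+1) - (((((i+1:ℤ)) : ZMod n)).val : ℤ) := by ring
      rw [e]
      simpa using dvd_neg.mpr hd
    · have ha1 : a ≠ (i : ZMod n) := by
        intro h
        apply h1
        rw [← castval a] at h
        rw [intCast_eq_iff_dvd] at h
        simpa using dvd_neg.mpr h
      have ha2 : a ≠ ((i+1:ℤ) : ZMod n) := by
        intro h
        apply h2
        rw [← castval a] at h
        rw [intCast_eq_iff_dvd] at h
        simpa using dvd_neg.mpr h
      rw [Equiv.swap_apply_of_ne_of_ne ha1 ha2]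
      show (((affS n i ((a.val : ℤ))) : ℤ) : ZMod n) = a
      rw [affS_apply_of_other hn h1 h2, castval]

lemma lprime_conj (hn : 2 ≤ n) {z : Equiv.Perm ℤ} (hz : Per n z) (i : ℤ) :
    lprime n (affS n i * z * affS n i) = lprime n z := by
  haveI : NeZero n := ⟨by omega⟩
  rw [lprime_eq, lprime_eq]
  have hs := affS_per hn i
  set c : Equiv.Perm (ZMod n) :=
    Function.Involutive.toPerm (barF n (affS n i)) (barF_s_invol hn i) with hc
  have hcsymm : ∀ a, c.symm a = barF n (affS n i) a := fun a => rfl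
  have hkey : ∀ a, barF n (affS n i * z * affS n i) a = c (barF n z (c.symm a)) := by
    intro a
    rw [hcsymm]
    show barF n (affS n i * z * affS n i) a = barF n (affS n i) (barF n z (barF n (affS n i) a))
    rw [barF_comp ((hs.mul hz)) hs, barF_comp hs hz]
  have h : QC (barF n (affS n i * z * affS n i)) = QC (barF n z) := by
    rw [QC_congr hkey]
    exact QC_conj (barF n z) c
  simp only [QC] at h
  omega

/-- ℓ' increases by one when multiplying a commuting ascent -/
lemma lprime_mul_s (hn : 2 ≤ n) {y : Equiv.Perm ℤ} (hy : Per n y) {i : ℤ}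
    (h1 : (n:ℤ) ∣ (y i - i)) (h2 : y (i+1) = y i + 1) :
    lprime n (y * affS n i) = lprime n y + 1 := by
  haveI : NeZero n := ⟨by omega⟩
  have hn0 : 0 < n := by omega
  set u : ZMod n := (i : ZMod n) with hu
  set v : ZMod n := ((i+1:ℤ) : ZMod n) with hv
  have huv : u ≠ v := by
    intro h
    rw [hu, hv, intCast_eq_iff_dvd] at h
    have h2' : (n:ℤ) ∣ 1 := by simpa using h
    have := Int.le_of_dvd one_pos h2'
    omega
  have hfu : barF n y u = u := by
    rw [hu, ← barF_cast hy i, intCast_eq_iff_dvd]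
    simpa using dvd_neg.mpr h1
  have hfv : barF n y v = v := by
    rw [hv, ← barF_cast hy (i+1), h2, intCast_eq_iff_dvd]
    have e : i + 1 - (y i + 1) = -(y i - i) := by ring
    rw [e]
    exact dvd_neg.mpr h1
  have hkey : ∀ a, barF n (y * affS n i) a = barF n y (Equiv.swap u v a) := by
    intro a
    rw [barF_comp hy (affS_per hn i), barF_s_eq_swap hn]
  have hmerge := QC_merge hn0 (barF_inj hy) huv hfu hfv
  rw [QC_congr (f := fun a => barF n y (Equiv.swap u v a)) (fun a => (hkey a).symm)] at hmerge
  have hle := QC_le hn0 (barF n y)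
  have hpos := QC_pos hn0 (barF n y)
  rw [lprime_eq, lprime_eq]
  simp only [QC] at hmerge hle hpos
  omega
end AuxI
section AuxJ
open Equiv Finset
variable {n : ℕ} {i : ℤ} {y : Equiv.Perm ℤ}

lemma affS_eq_add_one (hn : 2 ≤ n) {x : ℤ} (h : affS n i x = x + 1) : (n:ℤ) ∣ (x - i) := by
  rw [affS_apply hn] at h
  split_ifs at h with h1 h2
  · exact h1
  · omega
  · omega

lemma affS_eq_sub_one (hn : 2 ≤ n) {x : ℤ} (h : affS n i x = x - 1) : (n:ℤ) ∣ (x - (i+1)) := by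
  rw [affS_apply hn] at h
  split_ifs at h with h1 h2
  · omega
  · exact h2
  · omega

lemma comm_asc_mpr (hn : 2 ≤ n) (hy : Per n y)
    (hd : (n:ℤ) ∣ (y i - i)) (he : y (i+1) = y i + 1) :
    y * affS n i = affS n i * y := by
  ext k
  simp only [Equiv.Perm.mul_apply]
  by_cases hk1 : (n:ℤ) ∣ (k - i)
  · rw [affS_apply_of_left hn hk1]
    have e1 : y (k+1) - (k+1) = y (i+1) - (i+1) := hy.congr_apply (by
      have e : k + 1 - (i+1) = k - i := by ring
      rw [e]; exact hk1)
    have e2 : y k - k = y i - i := hy.congr_apply hk1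
    have e3 : (n:ℤ) ∣ (y k - i) := by
      have : y k - i = (y i - i) + (k - i) := by omega
      rw [this]; exact hd.add hk1
    rw [affS_apply_of_left hn e3]
    omega
  · by_cases hk2 : (n:ℤ) ∣ (k - (i+1))
    · rw [affS_apply_of_right hn hk2]
      have e1 : y (k-1) - (k-1) = y i - i := hy.congr_apply (by
        have e : k - 1 - i = k - (i+1) := by ring
        rw [e]; exact hk2)
      have e2 : y k - k = y (i+1) - (i+1) := hy.congr_apply hk2
      have e3 : (n:ℤ) ∣ (y k - (i+1)) := by
        have : y k - (i+1) = (y i - i) + (k - (i+1)) := by omega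
        rw [this]; exact hd.add hk2
      rw [affS_apply_of_right hn e3]
      omega
    · rw [affS_apply_of_other hn hk1 hk2]
      have e3 : ¬ (n:ℤ) ∣ (y k - i) := by
        intro hc
        apply hk1
        rw [← hy.dvd_sub_iff (x := k) (y := i)]
        have : y k - y i = (y k - i) - (y i - i) := by ring
        rw [this]
        exact hc.sub hd
      have e4 : ¬ (n:ℤ) ∣ (y k - (i+1)) := by
        intro hc
        apply hk2
        rw [← hy.dvd_sub_iff (x := k) (y := i+1)]
        have : y k - y (i+1) = (y k - (i+1)) - (y i - i) := by omega
        rw [this]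
        exact hc.sub hd
      rw [affS_apply_of_other hn e3 e4]

lemma comm_desc_mpr (hn : 2 ≤ n) (hy : Per n y)
    (hd : (n:ℤ) ∣ (y i - (i+1))) (he : y (i+1) = y i - 1) :
    y * affS n i = affS n i * y := by
  ext k
  simp only [Equiv.Perm.mul_apply]
  by_cases hk1 : (n:ℤ) ∣ (k - i)
  · rw [affS_apply_of_left hn hk1]
    have e1 : y (k+1) - (k+1) = y (i+1) - (i+1) := hy.congr_apply (by
      have e : k + 1 - (i+1) = k - i := by ring
      rw [e]; exact hk1)
    have e2 : y k - k = y i - i := hy.congr_apply hk1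
    have e3 : (n:ℤ) ∣ (y k - (i+1)) := by
      have : y k - (i+1) = (y i - (i+1)) + (k - i) := by omega
      rw [this]; exact hd.add hk1
    rw [affS_apply_of_right hn e3]
    omega
  · by_cases hk2 : (n:ℤ) ∣ (k - (i+1))
    · rw [affS_apply_of_right hn hk2]
      have e1 : y (k-1) - (k-1) = y i - i := hy.congr_apply (by
        have e : k - 1 - i = k - (i+1) := by ring
        rw [e]; exact hk2)
      have e2 : y k - k = y (i+1) - (i+1) := hy.congr_apply hk2
      have e3 : (n:ℤ) ∣ (y k - i) := by
        have : y k - i = (y i - (i+1)) + (k - (i+1)) := by omega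
        rw [this]; exact hd.add hk2
      rw [affS_apply_of_left hn e3]
      omega
    · rw [affS_apply_of_other hn hk1 hk2]
      have e3 : ¬ (n:ℤ) ∣ (y k - i) := by
        intro hc
        apply hk2
        rw [← hy.dvd_sub_iff (x := k) (y := i+1)]
        have : y k - y (i+1) = (y k - i) - (y i - (i+1)) - ((i+1) - i - 1) := by omega
        simp only [(by ring : (i+1) - i - (1:ℤ) = 0), sub_zero] at this
        rw [this]
        exact hc.sub hd
      have e4 : ¬ (n:ℤ) ∣ (y k - (i+1)) := by
        intro hc
        apply hk1
        rw [← hy.dvd_sub_iff (x := k) (y := i)]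
        have : y k - y i = (y k - (i+1)) - (y i - (i+1)) := by ring
        rw [this]
        exact hc.sub hd
      rw [affS_apply_of_other hn e3 e4]

lemma comm_asc_mp (hn : 2 ≤ n) (hc : y * affS n i = affS n i * y)
    (hasc : y i < y (i+1)) : (n:ℤ) ∣ (y i - i) ∧ y (i+1) = y i + 1 := by
  have h1 : y (affS n i i) = affS n i (y i) := by
    have := congrArg (fun e => e i) hc
    simpa [Equiv.Perm.mul_apply] using this
  rw [affS_apply_of_left hn (by simp)] at h1
  rcases affS_cases hn i (y i) with hcc | hcc | hcc
  · rw [hcc] at h1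
    exact ⟨affS_eq_add_one hn hcc, h1⟩
  · rw [hcc] at h1; omega
  · rw [hcc] at h1; omega

lemma comm_desc_mp (hn : 2 ≤ n) (hc : y * affS n i = affS n i * y)
    (hdesc : y (i+1) < y i) : (n:ℤ) ∣ (y i - (i+1)) ∧ y (i+1) = y i - 1 := by
  have h1 : y (affS n i i) = affS n i (y i) := by
    have := congrArg (fun e => e i) hc
    simpa [Equiv.Perm.mul_apply] using this
  rw [affS_apply_of_left hn (by simp)] at h1
  rcases affS_cases hn i (y i) with hcc | hcc | hcc
  · rw [hcc] at h1; omega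
  · rw [hcc] at h1
    exact ⟨affS_eq_sub_one hn hcc, h1⟩
  · rw [hcc] at h1; omega

lemma asc_noncomm (hn : 2 ≤ n) (hy : Per n y)
    (hasc : y i < y (i+1)) (hnc : ¬ y * affS n i = affS n i * y) :
    affS n i (y i) < affS n i (y (i+1)) := by
  set A := y i
  set B := y (i+1)
  have hAB : A ≠ B := by omega
  have hsne : affS n i A ≠ affS n i B := fun h => hAB ((affS n i).injective h)
  have hA : affS n i A ≤ A + 1 := by
    rcases affS_cases hn i A with h | h | h <;> omega
  have hB : B - 1 ≤ affS n i B := by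
    rcases affS_cases hn i B with h | h | h <;> omega
  have hkey : B = A + 1 → affS n i B ≠ B - 1 := by
    intro hBA h
    have hd2 : (n:ℤ) ∣ (B - (i+1)) := affS_eq_sub_one hn h
    have hd1 : (n:ℤ) ∣ (A - i) := by
      have e : A - i = B - (i+1) := by omega
      rw [e]; exact hd2
    exact hnc (comm_asc_mpr hn hy hd1 (by omega))
  by_cases hBA : B = A + 1
  · have := hkey hBA
    omega
  · omega

lemma desc_noncomm (hn : 2 ≤ n) (hy : Per n y)
    (hdesc : y (i+1) < y i) (hnc : ¬ y * affS n i = affS n i * y) :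
    affS n i (y (i+1)) < affS n i (y i) := by
  set A := y i
  set B := y (i+1)
  have hAB : A ≠ B := by omega
  have hsne : affS n i A ≠ affS n i B := fun h => hAB ((affS n i).injective h)
  have hB : affS n i B ≤ B + 1 := by
    rcases affS_cases hn i B with h | h | h <;> omega
  have hA : A - 1 ≤ affS n i A := by
    rcases affS_cases hn i A with h | h | h <;> omega
  have hkey : B = A - 1 → affS n i A ≠ A - 1 := by
    intro hBA h
    have hd2 : (n:ℤ) ∣ (A - (i+1)) := affS_eq_sub_one hn h
    exact hnc (comm_desc_mpr hn hy hd2 (by omega))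
  by_cases hBA : B = A - 1
  · have := hkey hBA
    omega
  · omega
end AuxJ
section AuxK
open Equiv Finset
variable {n : ℕ} {D : Equiv.Perm ℤ → Equiv.Perm ℤ → Equiv.Perm ℤ}

lemma sq_eq_self (hn : 2 ≤ n) {a : Equiv.Perm ℤ} (i : ℤ) :
    a * affS n i * affS n i = a := by
  rw [mul_assoc, affS_mul_self hn, mul_one]

lemma sq_eq_self' (hn : 2 ≤ n) {a : Equiv.Perm ℤ} (i : ℤ) :
    affS n i * (affS n i * a) = a := by
  rw [← mul_assoc, affS_mul_self hn, one_mul]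

lemma D_right_asc (hn : 2 ≤ n) (hD : IsDemazure n D) {a : Equiv.Perm ℤ} (ha : IsAffine n a)
    {i : ℤ} (hi : i ∈ Finset.Icc (1:ℤ) (n:ℤ))
    (h : wordLength n (a * affS n i) = wordLength n a + 1) :
    D a (affS n i) = a * affS n i :=
  hD.2.2.2 a (affS n i) ha (affS_isAffine hn i) (by rw [h, wordLength_s hn hi])

lemma D_left_asc (hn : 2 ≤ n) (hD : IsDemazure n D) {a : Equiv.Perm ℤ} (ha : IsAffine n a)
    {i : ℤ} (hi : i ∈ Finset.Icc (1:ℤ) (n:ℤ))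
    (h : wordLength n (affS n i * a) = wordLength n a + 1) :
    D (affS n i) a = affS n i * a :=
  hD.2.2.2 (affS n i) a (affS_isAffine hn i) ha (by rw [h, wordLength_s hn hi]; omega)

lemma D_right_desc (hn : 2 ≤ n) (hD : IsDemazure n D) {a : Equiv.Perm ℤ} (ha : IsAffine n a)
    {i : ℤ} (hi : i ∈ Finset.Icc (1:ℤ) (n:ℤ))
    (h : wordLength n (a * affS n i) + 1 = wordLength n a) :
    D a (affS n i) = a := by
  have hn0 : 0 < n := by omega
  set a' := a * affS n i with ha'
  have ha'aff : IsAffine n a' := IsAffine.mul hn0 ha (affS_isAffine hn i)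
  have h1 : a' * affS n i = a := sq_eq_self hn i
  have h2 : D a' (affS n i) = a := by
    rw [← h1]
    exact D_right_asc hn hD ha'aff hi (by rw [h1, ← h])
  calc D a (affS n i) = D (D a' (affS n i)) (affS n i) := by rw [h2]
    _ = D a' (D (affS n i) (affS n i)) :=
        hD.2.1 a' (affS n i) (affS n i) ha'aff (affS_isAffine hn i) (affS_isAffine hn i)
    _ = D a' (affS n i) := by rw [hD.2.2.1 i]
    _ = a := h2

lemma D_left_desc (hn : 2 ≤ n) (hD : IsDemazure n D) {a : Equiv.Perm ℤ} (ha : IsAffine n a)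
    {i : ℤ} (hi : i ∈ Finset.Icc (1:ℤ) (n:ℤ))
    (h : wordLength n (affS n i * a) + 1 = wordLength n a) :
    D (affS n i) a = a := by
  have hn0 : 0 < n := by omega
  set a' := affS n i * a with ha'
  have ha'aff : IsAffine n a' := IsAffine.mul hn0 (affS_isAffine hn i) ha
  have h1 : affS n i * a' = a := sq_eq_self' hn i
  have h2 : D (affS n i) a' = a := by
    rw [← h1]
    exact D_left_asc hn hD ha'aff hi (by rw [h1, ← h])
  calc D (affS n i) a = D (affS n i) (D (affS n i) a') := by rw [h2]
    _ = D (D (affS n i) (affS n i)) a' :=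
        (hD.2.1 (affS n i) (affS n i) a' (affS_isAffine hn i) (affS_isAffine hn i) ha'aff).symm
    _ = D (affS n i) a' := by rw [hD.2.2.1 i]
    _ = a := h2

/-- inverse length transfers -/
lemma wordLength_smul (hn : 2 ≤ n) {a : Equiv.Perm ℤ} (ha : IsAffine n a) (i : ℤ) :
    wordLength n (affS n i * a) = wordLength n (a⁻¹ * affS n i) := by
  have hn0 : 0 < n := by omega
  have h1 : (affS n i * a)⁻¹ = a⁻¹ * affS n i := by
    rw [mul_inv_rev, affS_inv hn]
  rw [← h1, wordLength_inv hn]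
  exact IsAffine.mul hn0 (affS_isAffine hn i) ha

/-- the Hecke recursion -/
lemma Hrec (hn : 2 ≤ n) (hD : IsDemazure n D) {π : Equiv.Perm ℤ} (hπ : IsAffine n π)
    {i : ℤ} (hi : i ∈ Finset.Icc (1:ℤ) (n:ℤ))
    (hdesc : wordLength n (π * affS n i) + 1 = wordLength n π) :
    D π⁻¹ π = D (affS n i) (D (D (π * affS n i)⁻¹ (π * affS n i)) (affS n i)) := by
  have hn0 : 0 < n := by omega
  set σ := π * affS n i with hσ
  have hσaff : IsAffine n σ := IsAffine.mul hn0 hπ (affS_isAffine hn i)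
  have hσinv : IsAffine n σ⁻¹ := hσaff.inv hn0
  have hsaff : IsAffine n (affS n i) := affS_isAffine hn i
  have h1 : σ * affS n i = π := sq_eq_self hn i
  have h2 : π⁻¹ = affS n i * σ⁻¹ := by
    rw [← h1, mul_inv_rev, affS_inv hn]
  have hDσs : D σ (affS n i) = π := by
    rw [← h1]
    exact D_right_asc hn hD hσaff hi (by rw [h1, ← hdesc])
  have hDsσ : D (affS n i) σ⁻¹ = π⁻¹ := by
    rw [h2]
    apply D_left_asc hn hD hσinv hi
    rw [← h2, wordLength_inv hn hπ, wordLength_inv hn hσaff, ← hdesc]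
  calc D π⁻¹ π = D (D (affS n i) σ⁻¹) (D σ (affS n i)) := by rw [hDσs, hDsσ]
    _ = D (affS n i) (D σ⁻¹ (D σ (affS n i))) :=
        hD.2.1 _ _ _ hsaff hσinv (hD.1 _ _ hσaff hsaff)
    _ = D (affS n i) (D (D σ⁻¹ σ) (affS n i)) := by
        rw [hD.2.1 σ⁻¹ σ (affS n i) hσinv hσaff hsaff]

/-- The trichotomy for D s (D y s) where y is an affine involution. -/
lemma tri (hn : 2 ≤ n) (hD : IsDemazure n D) {y : Equiv.Perm ℤ} (hy : IsAffine n y)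
    (hyi : y⁻¹ = y) {i : ℤ} (hi : i ∈ Finset.Icc (1:ℤ) (n:ℤ)) :
    (IsAffine n (D (affS n i) (D y (affS n i))) ∧
      (D (affS n i) (D y (affS n i)))⁻¹ = D (affS n i) (D y (affS n i))) ∧
    ((y (i+1) < y i ∧ D (affS n i) (D y (affS n i)) = y) ∨
     (y i < y (i+1) ∧ D (affS n i) (D y (affS n i)) = y * affS n i ∧
        wordLength n (D (affS n i) (D y (affS n i))) = wordLength n y + 1 ∧
        lprime n (D (affS n i) (D y (affS n i))) = lprime n y + 1) ∨
     (y i < y (i+1) ∧ D (affS n i) (D y (affS n i)) = affS n i * y * affS n i ∧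
        wordLength n (D (affS n i) (D y (affS n i))) = wordLength n y + 2 ∧
        lprime n (D (affS n i) (D y (affS n i))) = lprime n y)) ∧
    wordLength n (D (affS n i) (D y (affS n i)) * affS n i) + 1 =
      wordLength n (D (affS n i) (D y (affS n i))) := by
  have hn0 : 0 < n := by omega
  have hsaff : IsAffine n (affS n i) := affS_isAffine hn i
  have hne : y i ≠ y (i+1) := fun h => by have := y.injective h; omega
  rcases lt_or_gt_of_ne hne with hasc | hdesc
  · -- ascent case
    have hys : wordLength n (y * affS n i) = wordLength n y + 1 := wordLength_asc hn hy hi hasc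
    have hDys : D y (affS n i) = y * affS n i := D_right_asc hn hD hy hi hys
    have hysaff : IsAffine n (y * affS n i) := IsAffine.mul hn0 hy hsaff
    by_cases hc : y * affS n i = affS n i * y
    · -- commuting ascent
      obtain ⟨hd, he⟩ := comm_asc_mp hn hc hasc
      have hsys : affS n i * (y * affS n i) = y := by
        rw [hc]
        exact sq_eq_self' hn i
      have hz : D (affS n i) (D y (affS n i)) = y * affS n i := by
        rw [hDys]
        apply D_left_desc hn hD hysaff hi
        rw [hsys, hys]
      have hzinv : (y * affS n i)⁻¹ = y * affS n i := by
        rw [mul_inv_rev, affS_inv hn, hyi, ← hc]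
      have hlp : lprime n (y * affS n i) = lprime n y + 1 := lprime_mul_s hn hy.per hd he
      refine ⟨⟨by rw [hz]; exact hysaff, by rw [hz]; exact hzinv⟩,
        Or.inr (Or.inl ⟨hasc, hz, by rw [hz, hys], by rw [hz, hlp]⟩), ?_⟩
      rw [hz, sq_eq_self hn, hys]
    · -- noncommuting ascent
      have hq := asc_noncomm hn hy.per hasc hc
      have hsy : (y * affS n i)⁻¹ = affS n i * y := by
        rw [mul_inv_rev, affS_inv hn, hyi]
      have hsyaff : IsAffine n (affS n i * y) := IsAffine.mul hn0 hsaff hy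
      have hlsys : wordLength n (affS n i * (y * affS n i)) = wordLength n (y * affS n i) + 1 := by
        rw [wordLength_smul hn hysaff, hsy]
        have : (affS n i * y) (i+1) < (affS n i * y) i → False := by
          intro h
          simp only [Equiv.Perm.mul_apply] at h
          omega
        have hasc' : (affS n i * y) i < (affS n i * y) (i+1) := by
          simp only [Equiv.Perm.mul_apply]
          exact hq
        rw [wordLength_asc hn hsyaff hi hasc']
        rw [← hsy, wordLength_inv hn hysaff]
    -- z = s y s
      have hz : D (affS n i) (D y (affS n i)) = affS n i * y * affS n i := by
        rw [hDys]
        rw [D_left_asc hn hD hysaff hi hlsys]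
        rw [← mul_assoc]
      have hzinv : (affS n i * y * affS n i)⁻¹ = affS n i * y * affS n i := by
        rw [mul_inv_rev, mul_inv_rev, affS_inv hn, hyi, mul_assoc]
      have hzaff : IsAffine n (affS n i * y * affS n i) :=
        IsAffine.mul hn0 (IsAffine.mul hn0 hsaff hy) hsaff
      have hlz : wordLength n (affS n i * y * affS n i) = wordLength n y + 2 := by
        have e : affS n i * y * affS n i = affS n i * (y * affS n i) := by rw [mul_assoc]
        rw [e, hlsys, hys]
      have hlp : lprime n (affS n i * y * affS n i) = lprime n y :=
        lprime_conj hn hy.per i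
      have hzdesc : (affS n i * y * affS n i) (i+1) < (affS n i * y * affS n i) i := by
        simp only [Equiv.Perm.mul_apply]
        rw [affS_apply_of_right hn (k := i+1) (by simp), affS_apply_of_left hn (k := i) (by simp)]
        have e : i + 1 - 1 = i := by ring
        rw [e]
        exact hq
      refine ⟨⟨by rw [hz]; exact hzaff, by rw [hz]; exact hzinv⟩,
        Or.inr (Or.inr ⟨hasc, hz, by rw [hz, hlz], by rw [hz, hlp]⟩), ?_⟩
      rw [hz]
      exact wordLength_desc hn hzaff hi hzdesc
  · -- descent case : z = y
    have hys : wordLength n (y * affS n i) + 1 = wordLength n y := wordLength_desc hn hy hi hdesc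
    have hDys : D y (affS n i) = y := D_right_desc hn hD hy hi hys
    have hz : D (affS n i) (D y (affS n i)) = y := by
      rw [hDys]
      apply D_left_desc hn hD hy hi
      rw [wordLength_smul hn hy]
      rw [hyi]
      exact hys
    refine ⟨⟨by rw [hz]; exact hy, by rw [hz]; exact hyi⟩, Or.inl ⟨hdesc, hz⟩, ?_⟩
    rw [hz]
    exact wordLength_desc hn hy hi hdesc
end AuxK
section AuxL
open Equiv Finset
variable {n : ℕ} {D : Equiv.Perm ℤ → Equiv.Perm ℤ → Equiv.Perm ℤ}

lemma D_one_one (hD : IsDemazure n D) : D 1 1 = (1 : Equiv.Perm ℤ) := by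
  have h := hD.2.2.2 1 1 IsAffine.one IsAffine.one (by rw [mul_one, wordLength_one])
  rw [mul_one] at h
  exact h

/-- part (a): the Hecke image of any affine permutation is an affine involution with
`ℓ + ℓ' ≤ 2ℓ(π)` -/
lemma Hinv (hn : 2 ≤ n) (hD : IsDemazure n D) :
    ∀ L : ℕ, ∀ π : Equiv.Perm ℤ, IsAffine n π → wordLength n π = L →
      IsAffine n (D π⁻¹ π) ∧ (D π⁻¹ π)⁻¹ = D π⁻¹ π ∧
      wordLength n (D π⁻¹ π) + lprime n (D π⁻¹ π) ≤ 2 * wordLength n π := by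
  have hn0 : 0 < n := by omega
  intro L
  induction L using Nat.strong_induction_on with
  | _ L ih =>
    intro π hπ hL
    by_cases hπ1 : π = 1
    · subst hπ1
      rw [inv_one, D_one_one hD]
      exact ⟨IsAffine.one, inv_one, by rw [wordLength_one, lprime_one hn0]⟩
    · obtain ⟨i, hi, hdi⟩ := exists_desc hn hπ hπ1
      have hdesc := wordLength_desc hn hπ hi hdi
      set σ := π * affS n i with hσ
      have hσaff : IsAffine n σ := IsAffine.mul hn0 hπ (affS_isAffine hn i)
      obtain ⟨hyaff, hyinv, hybound⟩ := ih (wordLength n σ) (by omega) σ hσaff rfl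
      have hrec := Hrec hn hD hπ hi hdesc
      obtain ⟨⟨hzaff, hzinv⟩, hcases, _⟩ := tri hn hD hyaff hyinv hi
      rw [← hrec] at hzaff hzinv
      refine ⟨hzaff, hzinv, ?_⟩
      rcases hcases with ⟨_, hz⟩ | ⟨_, _, hlen, hlp⟩ | ⟨_, _, hlen, hlp⟩ <;>
        rw [← hrec] at *
      · rw [hz]; omega
      · omega
      · omega

/-- descents transfer: if the Hecke image ascends at i, so does any Hecke preimage -/
lemma atom_asc (hn : 2 ≤ n) (hD : IsDemazure n D) {π : Equiv.Perm ℤ} (hπ : IsAffine n π)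
    {i : ℤ} (hi : i ∈ Finset.Icc (1:ℤ) (n:ℤ))
    (hyasc : (D π⁻¹ π) i < (D π⁻¹ π) (i+1)) :
    wordLength n (π * affS n i) = wordLength n π + 1 := by
  rcases wordLength_step hn hπ hi with hdesc | hasc
  · exfalso
    have hrec := Hrec hn hD hπ hi hdesc
    obtain ⟨hy'aff, hy'inv, _⟩ := Hinv hn hD _ (π * affS n i)
      (IsAffine.mul (by omega) hπ (affS_isAffine hn i)) rfl
    obtain ⟨_, _, hzdesc⟩ := tri hn hD hy'aff hy'inv hi
    rw [← hrec] at hzdesc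
    obtain ⟨hHaff, _, _⟩ := Hinv hn hD _ π hπ rfl
    have := wordLength_asc hn hHaff hi hyasc
    omega
  · exact hasc

/-- part (b): existence of a Hecke atom of the predicted length -/
lemma atom_exists (hn : 2 ≤ n) (hD : IsDemazure n D) :
    ∀ L : ℕ, ∀ z : Equiv.Perm ℤ, IsAffine n z → z⁻¹ = z → wordLength n z = L →
      ∃ π : Equiv.Perm ℤ, IsAffine n π ∧ D π⁻¹ π = z ∧
        2 * wordLength n π = wordLength n z + lprime n z := by
  have hn0 : 0 < n := by omega
  intro L
  induction L using Nat.strong_induction_on with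
  | _ L ih =>
    intro z hz hzi hL
    by_cases hz1 : z = 1
    · subst hz1
      exact ⟨1, IsAffine.one, by rw [inv_one, D_one_one hD],
        by rw [wordLength_one, lprime_one hn0]⟩
    · obtain ⟨i, hi, hd⟩ := exists_desc hn hz hz1
      have hzs := wordLength_desc hn hz hi hd
      have hsaff : IsAffine n (affS n i) := affS_isAffine hn i
      by_cases hcomm : z * affS n i = affS n i * z
      · -- commuting case : y = z s
        obtain ⟨hdd, hde⟩ := comm_desc_mp hn hcomm hd
        set y := z * affS n i with hy
        have hyaff : IsAffine n y := IsAffine.mul hn0 hz hsaff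
        have hyinv : y⁻¹ = y := by
          rw [hy, mul_inv_rev, affS_inv hn, hzi, ← hcomm]
        have hyvi : y i = z (i+1) := by
          show z (affS n i i) = _
          rw [affS_apply_of_left hn (k := i) (by simp)]
        have hyvi1 : y (i+1) = z i := by
          show z (affS n i (i+1)) = _
          rw [affS_apply_of_right hn (k := i+1) (by simp)]
          norm_num
        have hyasc : y i < y (i+1) := by rw [hyvi, hyvi1]; exact hd
        have hyd : (n:ℤ) ∣ (y i - i) := by
          rw [hyvi, hde]
          have e : z i - 1 - i = z i - (i+1) := by ring
          rw [e]; exact hdd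
        have hye : y (i+1) = y i + 1 := by rw [hyvi, hyvi1, hde]; ring
        have hly : wordLength n y + 1 = wordLength n z := hzs
        obtain ⟨π₀, hπ₀aff, hπ₀H, hπ₀len⟩ := ih (wordLength n y) (by omega) y hyaff hyinv rfl
        have hπ₀s : wordLength n (π₀ * affS n i) = wordLength n π₀ + 1 :=
          atom_asc hn hD hπ₀aff hi (by rw [hπ₀H]; exact hyasc)
        set π := π₀ * affS n i with hπ
        have hπaff : IsAffine n π := IsAffine.mul hn0 hπ₀aff hsaff
        have hπs : π * affS n i = π₀ := sq_eq_self hn i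
        have hdescπ : wordLength n (π * affS n i) + 1 = wordLength n π := by
          rw [hπs, hπ, hπ₀s]
        have hrec := Hrec hn hD hπaff hi hdescπ
        rw [hπs, hπ₀H] at hrec
        have hysz : y * affS n i = z := by rw [hy]; exact sq_eq_self hn i
        have hDys : D y (affS n i) = y * affS n i := by
          apply D_right_asc hn hD hyaff hi
          rw [hysz]; omega
        have hDsz : D (affS n i) z = z := by
          apply D_left_desc hn hD hz hi
          rw [wordLength_smul hn hz, hzi]
          exact hzs
        have hHz : D π⁻¹ π = z := by
          rw [hrec, hDys, hysz, hDsz]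
        have hlp : lprime n z = lprime n y + 1 := by
          rw [← hysz]
          exact lprime_mul_s hn hyaff.per hyd hye
        exact ⟨π, hπaff, hHz, by rw [hπ, hπ₀s]; omega⟩
      · -- noncommuting case : y = s z s
        have hq := desc_noncomm hn hz.per hd hcomm
        set y := affS n i * z * affS n i with hy
        have hyaff : IsAffine n y :=
          IsAffine.mul hn0 (IsAffine.mul hn0 hsaff hz) hsaff
        have hyinv : y⁻¹ = y := by
          rw [hy, mul_inv_rev, mul_inv_rev, affS_inv hn, hzi, mul_assoc]
        have hszaff : IsAffine n (affS n i * z) := IsAffine.mul hn0 hsaff hz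
        have hlsz : wordLength n (affS n i * z) + 1 = wordLength n z := by
          rw [wordLength_smul hn hz, hzi]
          exact hzs
        have hszdesc : (affS n i * z) (i+1) < (affS n i * z) i := by
          simp only [Equiv.Perm.mul_apply]
          exact hq
        have hly : wordLength n y + 1 = wordLength n (affS n i * z) := by
          rw [hy]
          exact wordLength_desc hn hszaff hi hszdesc
        have hyvi : y i = affS n i (z (i+1)) := by
          show affS n i (z (affS n i i)) = _
          rw [affS_apply_of_left hn (k := i) (by simp)]
        have hyvi1 : y (i+1) = affS n i (z i) := by
          show affS n i (z (affS n i (i+1))) = _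
          rw [affS_apply_of_right hn (k := i+1) (by simp)]
          norm_num
        have hyasc : y i < y (i+1) := by rw [hyvi, hyvi1]; exact hq
        obtain ⟨π₀, hπ₀aff, hπ₀H, hπ₀len⟩ := ih (wordLength n y) (by omega) y hyaff hyinv rfl
        have hπ₀s : wordLength n (π₀ * affS n i) = wordLength n π₀ + 1 :=
          atom_asc hn hD hπ₀aff hi (by rw [hπ₀H]; exact hyasc)
        set π := π₀ * affS n i with hπ
        have hπaff : IsAffine n π := IsAffine.mul hn0 hπ₀aff hsaff
        have hπs : π * affS n i = π₀ := sq_eq_self hn i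
        have hdescπ : wordLength n (π * affS n i) + 1 = wordLength n π := by
          rw [hπs, hπ, hπ₀s]
        have hrec := Hrec hn hD hπaff hi hdescπ
        rw [hπs, hπ₀H] at hrec
        have hys : y * affS n i = affS n i * z := by
          rw [hy]; exact sq_eq_self hn i
        have hsyz : affS n i * (y * affS n i) = z := by
          rw [hys]; exact sq_eq_self' hn i
        have hysaff : IsAffine n (y * affS n i) := IsAffine.mul hn0 hyaff hsaff
        have hDys : D y (affS n i) = y * affS n i := by
          apply D_right_asc hn hD hyaff hi
          rw [hys]; omega
        have hDsys : D (affS n i) (y * affS n i) = z := by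
          rw [← hsyz]
          apply D_left_asc hn hD hysaff hi
          rw [hsyz, hys]; omega
        have hHz : D π⁻¹ π = z := by rw [hrec, hDys, hDsys]
        have hlp : lprime n y = lprime n z := by
          rw [hy]; exact lprime_conj hn hz.per i
        exact ⟨π, hπaff, hHz, by rw [hπ, hπ₀s]; omega⟩

/-- n = 1 : everything is trivial -/
lemma affine_n1 {π : Equiv.Perm ℤ} (hπ : IsAffine 1 π) : π = 1 := by
  have h1 : π 1 = 1 := by
    have h := hπ.2
    rw [Nat.cast_one, Finset.Icc_self, Finset.sum_singleton, Finset.sum_singleton] at h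
    exact h
  ext k
  have h2 := hπ.per.translate (k - 1) 1
  rw [Nat.cast_one, mul_one, h1] at h2
  have e : 1 + (k - 1) = k := by ring
  rw [e] at h2
  simpa using h2
end AuxL

/-- `ℓ̂(z) = (ℓ(z) + ℓ'(z))/2` is a nonnegative integer (i.e. the sum
is even) and equals `ℓ(π)` for every minimal-length Hecke atom `π` of `z`. -/
theorem half_length_atoms (n : ℕ) (hn : 0 < n)
    (D : Equiv.Perm ℤ → Equiv.Perm ℤ → Equiv.Perm ℤ) (hD : IsDemazure n D)
    (z : Equiv.Perm ℤ) (hz : IsAffine n z) (hzi : z⁻¹ = z) :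
    2 ∣ (wordLength n z + lprime n z) ∧
    ∀ π ∈ DemAtoms n D z, 2 * wordLength n π = wordLength n z + lprime n z := by
  by_cases hn2 : 2 ≤ n
  · obtain ⟨π₀, hπ₀aff, hπ₀H, hπ₀len⟩ := atom_exists hn2 hD _ z hz hzi rfl
    constructor
    · exact ⟨wordLength n π₀, by omega⟩
    · rintro π ⟨⟨hπaff, hπH⟩, hmin⟩
      have h1 := (Hinv hn2 hD _ π hπaff rfl).2.2
      rw [hπH] at h1
      have h2 := hmin π₀ ⟨hπ₀aff, hπ₀H⟩
      omega
  · have hn1 : n = 1 := by omega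
    subst hn1
    have hzone : z = 1 := affine_n1 hz
    subst hzone
    rw [wordLength_one, lprime_one one_pos]
    refine ⟨⟨0, by omega⟩, ?_⟩
    rintro π ⟨⟨hπaff, _⟩, _⟩
    rw [affine_n1 hπaff, wordLength_one]
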